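/- arXiv:1312.3552 — 4 statements merged into one kernel-verified Lean document; each statement's English description precedes it below -/
import Mathlib

section
/- Let M be a popular matching of a CHA instance I with switching graph G_M. If h is a saturated vertex of G_M all of whose outgoing edges have weight −1, then h has no incoming edge of weight −1. -/
/-- A Capacitated House Allocation (CHA) instance: agents `A`, houses `H`, a capacity
function `cap : H → ℤ_{>0}`, and for each agent a strict preference order (lower rank
means more preferred) over its adjacent houses, augmented with a unique last-resort
house `l(a)` of capacity `1` and lowest preference, appearing only on `a`'s list. -/
structure CHAInstance (A H : Type*) where
  adj : A → H → Prop
  rank : A → H → ℕ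
  rank_strict : ∀ a h h', adj a h → adj a h' → rank a h = rank a h' → h = h'
  cap : H → ℕ
  cap_pos : ∀ h, 0 < cap h
  lastResort : A → H
  lastResort_injective : Function.Injective lastResort
  lastResort_adj : ∀ a, adj a (lastResort a)
  lastResort_worst : ∀ a h, adj a h → h ≠ lastResort a → rank a h < rank a (lastResort a)
  lastResort_only : ∀ a a', adj a' (lastResort a) → a' = a
  lastResort_cap : ∀ a, cap (lastResort a) = 1

namespace CHAInstance

variable {A H : Type*}

/-- A matching of the CHA instance `I`: each agent is matched to at most one adjacent
house, and each house `h` is matched to at most `cap h` agents. -/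
def IsMatching (I : CHAInstance A H) (M : Set (A × H)) : Prop :=
  (∀ p ∈ M, I.adj p.1 p.2) ∧ (∀ p ∈ M, ∀ q ∈ M, p.1 = q.1 → p = q) ∧
    (∀ h : H, {a | (a, h) ∈ M}.ncard ≤ I.cap h)

/-- Agent `a` prefers matching `M` to matching `M'`: `a` is matched in `M` and either
unmatched in `M'`, or strictly prefers its house in `M` to its house in `M'`. -/
def Prefers (I : CHAInstance A H) (M M' : Set (A × H)) (a : A) : Prop :=
  ∃ h, (a, h) ∈ M ∧ ∀ h', (a, h') ∈ M' → I.rank a h < I.rank a h'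

/-- `M` is more popular than `M'`. -/
def MorePopular [Fintype A] (I : CHAInstance A H) (M M' : Set (A × H)) : Prop :=
  Nat.card {a | Prefers I M M' a} > Nat.card {a | Prefers I M' M a}

/-- `M` is a popular matching of `I`. -/
def IsPopular [Fintype A] (I : CHAInstance A H) (M : Set (A × H)) : Prop :=
  I.IsMatching M ∧ ∀ M', I.IsMatching M' → ¬ MorePopular I M' M

/-- `h = f(a)`: house `h` is the (unique) first choice of agent `a`. -/
def IsFirstChoice (I : CHAInstance A H) (a : A) (h : H) : Prop :=
  I.adj a h ∧ ∀ h', I.adj a h' → I.rank a h ≤ I.rank a h'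

/-- `f(h)`: the set of agents whose first choice is `h`. -/
def fSet (I : CHAInstance A H) (h : H) : Set A := {a | IsFirstChoice I a h}

/-- `h` is an `f`-house if it is the first choice of some agent. -/
def IsFHouse (I : CHAInstance A H) (h : H) : Prop := ∃ a, IsFirstChoice I a h

/-- The defining condition for `s(a)`: `h` is not an `f`-house, or `h` is an `f`-house
with `h ≠ f(a)` and `|f(h)| < c(h)`. -/
def SCond (I : CHAInstance A H) (a : A) (h : H) : Prop :=
  ¬ IsFHouse I h ∨ (¬ IsFirstChoice I a h ∧ (fSet I h).ncard < I.cap h)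

/-- `h = s(a)`: house `h` is the highest-ranked house on `a`'s preference list
satisfying `SCond`. -/
def IsSecondChoice (I : CHAInstance A H) (a : A) (h : H) : Prop :=
  I.adj a h ∧ SCond I a h ∧ ∀ h', I.adj a h' → SCond I a h' → I.rank a h ≤ I.rank a h'

/-- The switching graph `G_M` of `I` with respect to a popular matching `M`:
`SwEdge I M a src tgt w` says that agent `a` contributes the directed edge from
`src = M(a)` to `tgt`, the other element of `{f(a), s(a)}`, with weight
`w = -1` if `M(a) = f(a)` and `w = +1` otherwise. -/
def SwEdge (I : CHAInstance A H) (M : Set (A × H)) (a : A) (src tgt : H) (w : ℤ) :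
    Prop :=
  (a, src) ∈ M ∧
    ((IsFirstChoice I a src ∧ IsSecondChoice I a tgt ∧ w = -1) ∨
     (IsSecondChoice I a src ∧ IsFirstChoice I a tgt ∧ w = 1))

/-- The unsaturation degree `u_M(h) = c(h) - |M(h)|` of a house `h`. -/
noncomputable def unsatDeg (I : CHAInstance A H) (M : Set (A × H)) (h : H) : ℕ :=
  I.cap h - {a | (a, h) ∈ M}.ncard

/-- A house is saturated if its unsaturation degree is `0`. -/
def Saturated (I : CHAInstance A H) (M : Set (A × H)) (h : H) : Prop :=
  unsatDeg I M h = 0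

end CHAInstance


namespace CHAProof

open CHAInstance

variable {A H : Type*}

lemma firstChoice_unique (I : CHAInstance A H) {a : A} {h h' : H}
    (h1 : IsFirstChoice I a h) (h2 : IsFirstChoice I a h') : h = h' :=
  I.rank_strict a h h' h1.1 h2.1 (le_antisymm (h1.2 h' h2.1) (h2.2 h h1.1))

lemma exists_firstChoice [Fintype H] (I : CHAInstance A H) (a : A) :
    ∃ h, IsFirstChoice I a h := by
  obtain ⟨h, hmem, hmin⟩ := Set.exists_min_image {x | I.adj a x} (I.rank a)
    (Set.toFinite _) ⟨I.lastResort a, I.lastResort_adj a⟩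
  exact ⟨h, hmem, hmin⟩

lemma exists_secondChoice [Fintype H] (I : CHAInstance A H) {a : A} {h : H}
    (hadj : I.adj a h) (hnf : ¬ IsFirstChoice I a h) :
    ∃ s, IsSecondChoice I a s := by
  have hS : SCond I a (I.lastResort a) := by
    left
    rintro ⟨a', hfa'⟩
    have hea := I.lastResort_only a a' hfa'.1
    subst hea
    rcases eq_or_ne h (I.lastResort a') with rfl | hne
    · exact hnf hfa'
    · exact absurd (hfa'.2 h hadj) (not_le.mpr (I.lastResort_worst a' h hadj hne))
  obtain ⟨s, hmem, hmin⟩ := Set.exists_min_image {x | I.adj a x ∧ SCond I a x}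
    (I.rank a) (Set.toFinite _) ⟨I.lastResort a, I.lastResort_adj a, hS⟩
  exact ⟨s, hmem.1, hmem.2, fun h' h1 h2 => hmin h' ⟨h1, h2⟩⟩

/-- Update a matching: agents in `T` get reassigned to `f`. -/
def upd (M : Set (A × H)) (T : Set A) (f : A → H) : Set (A × H) :=
  {p | (p ∈ M ∧ p.1 ∉ T) ∨ (p.1 ∈ T ∧ p.2 = f p.1)}

lemma mem_upd {M : Set (A × H)} {T : Set A} {f : A → H} {p : A × H} :
    p ∈ upd M T f ↔ (p ∈ M ∧ p.1 ∉ T) ∨ (p.1 ∈ T ∧ p.2 = f p.1) := Iff.rfl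

lemma upd_isMatching (I : CHAInstance A H) {M : Set (A × H)} (hM : IsMatching I M)
    {T : Set A} {f : A → H} (hadj : ∀ a ∈ T, I.adj a (f a))
    (hcap : ∀ w, {a | (a, w) ∈ upd M T f}.ncard ≤ I.cap w) :
    IsMatching I (upd M T f) := by
  refine ⟨?_, ?_, hcap⟩
  · rintro p (⟨hp, -⟩ | ⟨hp, he⟩)
    · exact hM.1 p hp
    · rw [he]; exact hadj p.1 hp
  · rintro p (⟨hp, hpT⟩ | ⟨hpT, hpe⟩) q (⟨hq, hqT⟩ | ⟨hqT, hqe⟩) hpq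
    · exact hM.2.1 p hp q hq hpq
    · exact absurd (hpq ▸ hqT) hpT
    · exact absurd (hpq ▸ hpT) hqT
    · exact Prod.ext hpq (by rw [hpe, hqe, hpq])

lemma prefers_upd_iff (I : CHAInstance A H) {M : Set (A × H)} (hM : IsMatching I M)
    {T : Set A} {f : A → H} {a : A} {x : H} (haT : a ∈ T) (hax : (a, x) ∈ M) :
    (Prefers I (upd M T f) M a ↔ I.rank a (f a) < I.rank a x) ∧
    (Prefers I M (upd M T f) a ↔ I.rank a x < I.rank a (f a)) := by
  have hxu : ∀ h', (a, h') ∈ M → h' = x := fun h' hh' =>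
    congrArg Prod.snd (hM.2.1 _ hh' _ hax rfl)
  have hfu : ∀ h', (a, h') ∈ upd M T f → h' = f a := by
    rintro h' (⟨-, hT⟩ | ⟨-, he⟩)
    · exact absurd haT hT
    · exact he
  have hfm : (a, f a) ∈ upd M T f := Or.inr ⟨haT, rfl⟩
  constructor
  · constructor
    · rintro ⟨z, hz, hlt⟩
      have hz' := hfu z hz
      subst hz'
      exact hlt x hax
    · intro hlt
      exact ⟨f a, hfm, fun h' hh' => by rw [hxu h' hh']; exact hlt⟩
  · constructor
    · rintro ⟨z, hz, hlt⟩
      have hz' := hxu z hz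
      subst hz'
      exact hlt (f a) hfm
    · intro hlt
      exact ⟨x, hax, fun h' hh' => by rw [hfu h' hh']; exact hlt⟩

lemma not_prefers_upd (I : CHAInstance A H) {M : Set (A × H)} {T : Set A}
    {f : A → H} {a : A} (haT : a ∉ T) :
    ¬ Prefers I (upd M T f) M a ∧ ¬ Prefers I M (upd M T f) a := by
  constructor
  · rintro ⟨z, (⟨hz, -⟩ | ⟨hT, -⟩), hlt⟩
    · exact absurd (hlt z hz) (lt_irrefl _)
    · exact haT hT
  · rintro ⟨z, hz, hlt⟩
    exact absurd (hlt z (Or.inl ⟨hz, haT⟩)) (lt_irrefl _)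

lemma ncard_le_of_subset_insert_diff {α : Type*} [Finite α] {U X : Set α} {u v : α}
    (hu : u ∈ X) (hsub : U ⊆ insert v (X \ {u})) : U.ncard ≤ X.ncard :=
  calc U.ncard ≤ (insert v (X \ {u})).ncard := Set.ncard_le_ncard hsub (Set.toFinite _)
    _ ≤ (X \ {u}).ncard + 1 := Set.ncard_insert_le _ _
    _ = X.ncard := Set.ncard_diff_singleton_add_one hu (Set.toFinite _)

end CHAProof

namespace CHAProof
open CHAInstance

variable {A H : Type*}

lemma not_better_scond [Fintype A] [Fintype H] (I : CHAInstance A H)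
    {M : Set (A × H)} (hM : IsPopular I M) {b : A} {hb s : H}
    (hbM : (b, hb) ∈ M) (hadj : I.adj b s) (hsc : SCond I b s)
    (hlt : I.rank b s < I.rank b hb) : False := by
  classical
  have hMm := hM.1
  by_cases hsats : {e | (e, s) ∈ M}.ncard < I.cap s
  · -- Case 1: s has room; move b to s.
    have hmatch : IsMatching I (upd M {b} (fun _ => s)) := by
      apply upd_isMatching I hMm
      · rintro a rfl
        exact hadj
      · intro w
        by_cases hws : w = s
        · rw [hws]
          have hsub : {a | (a, s) ∈ upd M {b} (fun _ => s)} ⊆ insert b {e | (e, s) ∈ M} := by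
            rintro x (⟨hx, -⟩ | ⟨hxT, -⟩)
            · exact Or.inr hx
            · exact Or.inl hxT
          calc {a | (a, s) ∈ upd M {b} (fun _ => s)}.ncard
              ≤ (insert b {e | (e, s) ∈ M}).ncard := Set.ncard_le_ncard hsub (Set.toFinite _)
            _ ≤ {e | (e, s) ∈ M}.ncard + 1 := Set.ncard_insert_le _ _
            _ ≤ I.cap s := hsats
        · have hsub : {a | (a, w) ∈ upd M {b} (fun _ => s)} ⊆ {e | (e, w) ∈ M} := by
            rintro x (⟨hx, -⟩ | ⟨-, he⟩)
            · exact hx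
            · exact absurd he hws
          exact (Set.ncard_le_ncard hsub (Set.toFinite _)).trans (hMm.2.2 w)
    have hgain : {a | Prefers I (upd M {b} (fun _ => s)) M a} = {b} := by
      ext a
      simp only [Set.mem_setOf_eq, Set.mem_singleton_iff]
      constructor
      · intro hp
        by_contra hne
        exact (not_prefers_upd I (T := {b}) (f := fun _ => s) (fun hm => hne hm)).1 hp
      · intro hab
        rw [show a = b from hab]
        exact (prefers_upd_iff I hMm (T := {b}) (f := fun _ => s)
          (Set.mem_singleton b) hbM).1.mpr hlt
    have hloss : {a | Prefers I M (upd M {b} (fun _ => s)) a} = ∅ := by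
      ext a
      simp only [Set.mem_setOf_eq, Set.mem_empty_iff_false, iff_false]
      intro hp
      by_cases hab : a = b
      · rw [hab] at hp
        exact absurd ((prefers_upd_iff I hMm (T := {b}) (f := fun _ => s)
          (Set.mem_singleton b) hbM).2.mp hp) (lt_asymm hlt)
      · exact (not_prefers_upd I (T := {b}) (f := fun _ => s) (fun hm => hab hm)).2 hp
    refine hM.2 _ hmatch ?_
    show Nat.card _ > Nat.card _
    rw [Nat.card_coe_set_eq, Nat.card_coe_set_eq, hgain, hloss,
      Set.ncard_singleton, Set.ncard_empty]
    norm_num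
  · -- s is saturated
    have hss : {e | (e, s) ∈ M}.ncard = I.cap s := le_antisymm (hMm.2.2 s) (not_lt.mp hsats)
    have hexc : ∃ c, (c, s) ∈ M ∧ ¬ IsFirstChoice I c s := by
      rcases hsc with hnf | ⟨-, hflt⟩
      · have hne : {e | (e, s) ∈ M}.Nonempty := by
          rw [← Set.ncard_pos (Set.toFinite _), hss]; exact I.cap_pos s
        obtain ⟨c, hc⟩ := hne
        exact ⟨c, hc, fun hf => hnf ⟨c, hf⟩⟩
      · by_contra hall
        push_neg at hall
        have hsub : {e | (e, s) ∈ M} ⊆ fSet I s := fun e he => hall e he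
        have := Set.ncard_le_ncard hsub (Set.toFinite _)
        omega
    obtain ⟨c, hcM, hcnf⟩ := hexc
    have hbs : hb ≠ s := fun he => by rw [he] at hlt; exact lt_irrefl _ hlt
    have hbc : b ≠ c := by
      rintro rfl
      exact hbs (congrArg Prod.snd (hMm.2.1 _ hbM _ hcM rfl))
    obtain ⟨g, hg⟩ := exists_firstChoice I c
    have hgs : g ≠ s := fun he => hcnf (he ▸ hg)
    have hadjcs : I.adj c s := hMm.1 _ hcM
    have hrg : I.rank c g < I.rank c s :=
      lt_of_le_of_ne (hg.2 s hadjcs) (fun he => hgs (I.rank_strict c g s hg.1 hadjcs he))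
    by_cases hcaseA : g = hb ∨ {e | (e, g) ∈ M}.ncard < I.cap g
    · -- Cases 2/3: two-agent improvement
      set f2 : A → H := fun e => if e = b then s else g with hf2
      have hf2b : f2 b = s := by simp [hf2]
      have hf2c : f2 c = g := by simp [hf2, Ne.symm hbc]
      have hbT : b ∈ ({b, c} : Set A) := Or.inl rfl
      have hcT : c ∈ ({b, c} : Set A) := Or.inr rfl
      have hmatch : IsMatching I (upd M {b, c} f2) := by
        apply upd_isMatching I hMm
        · intro a ha
          rcases ha with rfl | rfl
          · rw [hf2b]; exact hadj
          · rw [hf2c]; exact hg.1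
        · intro w
          by_cases hws : w = s
          · rw [hws]
            refine (ncard_le_of_subset_insert_diff (v := b) hcM ?_).trans (hMm.2.2 s)
            rintro x (⟨hx, hnT⟩ | ⟨hT, he⟩)
            · exact Or.inr ⟨hx, fun hxc => hnT (Or.inr hxc)⟩
            · rcases hT with rfl | rfl
              · exact Or.inl rfl
              · rw [hf2c] at he; exact absurd he.symm hgs
          · by_cases hwg : w = g
            · rw [hwg] at hws ⊢
              rcases hcaseA with hgh | hgun
              · have hbMg : (b, g) ∈ M := by rw [hgh]; exact hbM
                refine (ncard_le_of_subset_insert_diff (v := c) hbMg ?_).trans (hMm.2.2 g)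
                rintro x (⟨hx, hnT⟩ | ⟨hT, he⟩)
                · exact Or.inr ⟨hx, fun hxb => hnT (Or.inl hxb)⟩
                · rcases hT with rfl | rfl
                  · rw [hf2b] at he; exact absurd he hws
                  · exact Or.inl rfl
              · have hsub : {a | (a, g) ∈ upd M {b, c} f2} ⊆ insert c {e | (e, g) ∈ M} := by
                  rintro x (⟨hx, -⟩ | ⟨hT, he⟩)
                  · exact Or.inr hx
                  · rcases hT with rfl | rfl
                    · rw [hf2b] at he; exact absurd he hws
                    · exact Or.inl rfl
                calc {a | (a, g) ∈ upd M {b, c} f2}.ncard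
                    ≤ (insert c {e | (e, g) ∈ M}).ncard := Set.ncard_le_ncard hsub (Set.toFinite _)
                  _ ≤ {e | (e, g) ∈ M}.ncard + 1 := Set.ncard_insert_le _ _
                  _ ≤ I.cap g := hgun
            · have hsub : {a | (a, w) ∈ upd M {b, c} f2} ⊆ {e | (e, w) ∈ M} := by
                rintro x (⟨hx, -⟩ | ⟨hT, he⟩)
                · exact hx
                · rcases hT with rfl | rfl
                  · rw [hf2b] at he; exact absurd he hws
                  · rw [hf2c] at he; exact absurd he hwg
              exact (Set.ncard_le_ncard hsub (Set.toFinite _)).trans (hMm.2.2 w)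
      have hgain : {a | Prefers I (upd M {b, c} f2) M a} = {b, c} := by
        ext a
        simp only [Set.mem_setOf_eq]
        constructor
        · intro hp
          by_contra hne
          exact (not_prefers_upd I hne).1 hp
        · rintro (rfl | rfl)
          · exact (prefers_upd_iff I hMm hbT hbM).1.mpr (by rw [hf2b]; exact hlt)
          · exact (prefers_upd_iff I hMm hcT hcM).1.mpr (by rw [hf2c]; exact hrg)
      have hloss : {a | Prefers I M (upd M {b, c} f2) a} = ∅ := by
        ext a
        simp only [Set.mem_setOf_eq, Set.mem_empty_iff_false, iff_false]
        intro hp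
        by_cases hT : a ∈ ({b, c} : Set A)
        · rcases hT with rfl | rfl
          · exact absurd ((prefers_upd_iff I hMm hbT hbM).2.mp hp)
              (by rw [hf2b]; exact lt_asymm hlt)
          · exact absurd ((prefers_upd_iff I hMm hcT hcM).2.mp hp)
              (by rw [hf2c]; exact lt_asymm hrg)
        · exact (not_prefers_upd I hT).2 hp
      refine hM.2 _ hmatch ?_
      show Nat.card _ > Nat.card _
      rw [Nat.card_coe_set_eq, Nat.card_coe_set_eq, hgain, hloss,
        Set.ncard_pair hbc, Set.ncard_empty]
      norm_num
    · -- Case 4: three-agent move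
      push_neg at hcaseA
      obtain ⟨hgh, hsatg⟩ := hcaseA
      have hgg : {e | (e, g) ∈ M}.ncard = I.cap g := le_antisymm (hMm.2.2 g) hsatg
      have hdne : {e | (e, g) ∈ M}.Nonempty := by
        rw [← Set.ncard_pos (Set.toFinite _), hgg]; exact I.cap_pos g
      obtain ⟨d, hdM⟩ := hdne
      have hdb : d ≠ b := by
        rintro rfl
        exact hgh (congrArg Prod.snd (hMm.2.1 _ hdM _ hbM rfl))
      have hdc : d ≠ c := by
        rintro rfl
        exact hgs (congrArg Prod.snd (hMm.2.1 _ hdM _ hcM rfl))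
      have hadjdg : I.adj d g := hMm.1 _ hdM
      have hldg : I.lastResort d ≠ g :=
        fun he => hdc (I.lastResort_only d c (by rw [he]; exact hg.1)).symm
      have hlds : I.lastResort d ≠ s :=
        fun he => hdc (I.lastResort_only d c (by rw [he]; exact hadjcs)).symm
      set f3 : A → H := fun e => if e = b then s else if e = c then g else I.lastResort d
        with hf3
      have hf3b : f3 b = s := by simp [hf3]
      have hf3c : f3 c = g := by simp [hf3, Ne.symm hbc]
      have hf3d : f3 d = I.lastResort d := by simp [hf3, hdb, hdc]
      have hbT : b ∈ ({b, c, d} : Set A) := Or.inl rfl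
      have hcT : c ∈ ({b, c, d} : Set A) := Or.inr (Or.inl rfl)
      have hdT : d ∈ ({b, c, d} : Set A) := Or.inr (Or.inr rfl)
      have hmatch : IsMatching I (upd M {b, c, d} f3) := by
        apply upd_isMatching I hMm
        · intro a ha
          rcases ha with rfl | rfl | rfl
          · rw [hf3b]; exact hadj
          · rw [hf3c]; exact hg.1
          · rw [hf3d]; exact I.lastResort_adj _
        · intro w
          by_cases hws : w = s
          · rw [hws]
            refine (ncard_le_of_subset_insert_diff (v := b) hcM ?_).trans (hMm.2.2 s)
            rintro x (⟨hx, hnT⟩ | ⟨hT, he⟩)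
            · exact Or.inr ⟨hx, fun hxc => hnT (Or.inr (Or.inl hxc))⟩
            · rcases hT with rfl | rfl | rfl
              · exact Or.inl rfl
              · rw [hf3c] at he; exact absurd he.symm hgs
              · rw [hf3d] at he; exact absurd he.symm hlds
          · by_cases hwg : w = g
            · rw [hwg] at hws ⊢
              refine (ncard_le_of_subset_insert_diff (v := c) hdM ?_).trans (hMm.2.2 g)
              rintro x (⟨hx, hnT⟩ | ⟨hT, he⟩)
              · exact Or.inr ⟨hx, fun hxd => hnT (Or.inr (Or.inr hxd))⟩
              · rcases hT with rfl | rfl | rfl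
                · rw [hf3b] at he; exact absurd he hws
                · exact Or.inl rfl
                · rw [hf3d] at he; exact absurd he.symm hldg
            · by_cases hwl : w = I.lastResort d
              · rw [hwl] at hws hwg ⊢
                have hsub : {a | (a, I.lastResort d) ∈ upd M {b, c, d} f3} ⊆ {d} := by
                  rintro x (⟨hx, hnT⟩ | ⟨hT, he⟩)
                  · exact absurd (Or.inr (Or.inr (I.lastResort_only d x (hMm.1 _ hx)))) hnT
                  · rcases hT with rfl | rfl | hxd
                    · rw [hf3b] at he; exact absurd he hws
                    · rw [hf3c] at he; exact absurd he hwg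
                    · exact hxd
                calc {a | (a, I.lastResort d) ∈ upd M {b, c, d} f3}.ncard
                    ≤ ({d} : Set A).ncard := Set.ncard_le_ncard hsub (Set.toFinite _)
                  _ = 1 := Set.ncard_singleton d
                  _ ≤ I.cap (I.lastResort d) := by rw [I.lastResort_cap d]
              · have hsub : {a | (a, w) ∈ upd M {b, c, d} f3} ⊆ {e | (e, w) ∈ M} := by
                  rintro x (⟨hx, -⟩ | ⟨hT, he⟩)
                  · exact hx
                  · rcases hT with rfl | rfl | rfl
                    · rw [hf3b] at he; exact absurd he hws
                    · rw [hf3c] at he; exact absurd he hwg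
                    · rw [hf3d] at he; exact absurd he hwl
                exact (Set.ncard_le_ncard hsub (Set.toFinite _)).trans (hMm.2.2 w)
      have hrdl : I.rank d g < I.rank d (I.lastResort d) :=
        I.lastResort_worst d g hadjdg (Ne.symm hldg)
      have hgain : {a | Prefers I (upd M {b, c, d} f3) M a} = {b, c} := by
        ext a
        simp only [Set.mem_setOf_eq]
        constructor
        · intro hp
          by_cases hT : a ∈ ({b, c, d} : Set A)
          · rcases hT with rfl | rfl | rfl
            · exact Or.inl rfl
            · exact Or.inr rfl
            · exact absurd ((prefers_upd_iff I hMm hdT hdM).1.mp hp)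
                (by rw [hf3d]; exact lt_asymm hrdl)
          · exact absurd hp (not_prefers_upd I hT).1
        · rintro (rfl | rfl)
          · exact (prefers_upd_iff I hMm hbT hbM).1.mpr (by rw [hf3b]; exact hlt)
          · exact (prefers_upd_iff I hMm hcT hcM).1.mpr (by rw [hf3c]; exact hrg)
      have hloss : {a | Prefers I M (upd M {b, c, d} f3) a} = {d} := by
        ext a
        simp only [Set.mem_setOf_eq]
        constructor
        · intro hp
          by_cases hT : a ∈ ({b, c, d} : Set A)
          · rcases hT with rfl | rfl | rfl
            · exact absurd ((prefers_upd_iff I hMm hbT hbM).2.mp hp)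
                (by rw [hf3b]; exact lt_asymm hlt)
            · exact absurd ((prefers_upd_iff I hMm hcT hcM).2.mp hp)
                (by rw [hf3c]; exact lt_asymm hrg)
            · exact rfl
          · exact absurd hp (not_prefers_upd I hT).2
        · rintro rfl
          exact (prefers_upd_iff I hMm hdT hdM).2.mpr (by rw [hf3d]; exact hrdl)
      refine hM.2 _ hmatch ?_
      show Nat.card _ > Nat.card _
      rw [Nat.card_coe_set_eq, Nat.card_coe_set_eq, hgain, hloss,
        Set.ncard_pair hbc, Set.ncard_singleton]
      norm_num

end CHAProof

open CHAInstance CHAProof in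
/-- Property 4: in the switching graph of a CHA instance with respect to
a popular matching `M`, if a saturated vertex `h` has all outgoing edges of weight
`-1`, then `h` has no incoming edge of weight `-1`. -/
theorem switchingGraph_saturated_no_incoming_minusOne
    {A H : Type*} [Fintype A] [Fintype H] (I : CHAInstance A H)
    (M : Set (A × H)) (hM : IsPopular I M) (h : H)
    (hsat : Saturated I M h)
    (hout : ∀ (a : A) (tgt : H) (w : ℤ), SwEdge I M a h tgt w → w = -1) :
    ∀ (a : A) (src : H), ¬ SwEdge I M a src h (-1) := by
  classical
  rintro a src ⟨hmemA, hcaseE⟩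
  rcases hcaseE with ⟨hfaA, hsaA, -⟩ | ⟨-, -, hww⟩
  swap
  · exact absurd hww (by norm_num)
  obtain ⟨hadjah, hscond, -⟩ := hsaA
  have hMm := hM.1
  have hMh : {e | (e, h) ∈ M}.ncard = I.cap h := by
    have h1 : I.cap h ≤ {e | (e, h) ∈ M}.ncard := Nat.sub_eq_zero_iff_le.mp hsat
    exact le_antisymm (hMm.2.2 h) h1
  have hexb : ∃ b, (b, h) ∈ M ∧ ¬ IsFirstChoice I b h := by
    rcases hscond with hnf | ⟨-, hflt⟩
    · have hne : {e | (e, h) ∈ M}.Nonempty := by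
        rw [← Set.ncard_pos (Set.toFinite _), hMh]; exact I.cap_pos h
      obtain ⟨b, hb⟩ := hne
      exact ⟨b, hb, fun hf => hnf ⟨b, hf⟩⟩
    · by_contra hall
      push_neg at hall
      have hsub : {e | (e, h) ∈ M} ⊆ fSet I h := fun e he => hall e he
      have := Set.ncard_le_ncard hsub (Set.toFinite _)
      omega
  obtain ⟨b, hbM, hbnf⟩ := hexb
  have hadjbh : I.adj b h := hMm.1 _ hbM
  by_cases hhS : SCond I b h
  · obtain ⟨s0, hs0⟩ := exists_secondChoice I hadjbh hbnf
    have hle : I.rank b s0 ≤ I.rank b h := hs0.2.2 h hadjbh hhS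
    rcases lt_or_eq_of_le hle with hlt | heq
    · exact not_better_scond I hM hbM hs0.1 hs0.2.1 hlt
    · have hsh : s0 = h := I.rank_strict b s0 h hs0.1 hadjbh heq
      obtain ⟨fb, hfb⟩ := exists_firstChoice I b
      have hedge : SwEdge I M b h fb 1 := ⟨hbM, Or.inr ⟨hsh ▸ hs0, hfb, rfl⟩⟩
      exact absurd (hout b fb 1 hedge) (by norm_num)
  · have hhS' : IsFHouse I h ∧ I.cap h ≤ (fSet I h).ncard := by
      rw [SCond] at hhS
      push_neg at hhS
      exact ⟨hhS.1, hhS.2 hbnf⟩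
    rcases hscond with hnf | ⟨-, hflt⟩
    · exact hnf hhS'.1
    · exact absurd hflt (not_lt.mpr hhS'.2)
end

section
/- Let M be a popular matching of a CHA instance I with switching graph G_M. If a vertex h of G_M has at least one incoming edge of weight +1, then all outgoing edges of h have weight −1, and h has no incoming edge of weight −1. -/
open CHAInstance

section Aux

variable {A H : Type*}

private lemma matched_eq {I : CHAInstance A H} {M : Set (A × H)}
    (hm : I.IsMatching M) {x : A} {u v : H} (hu : (x, u) ∈ M) (hv : (x, v) ∈ M) :
    u = v :=
  congrArg Prod.snd (hm.2.1 _ hu _ hv rfl)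

private lemma exists_first [Fintype H] (I : CHAInstance A H) (x : A) :
    ∃ h, IsFirstChoice I x h := by
  classical
  obtain ⟨h, hh, hmin⟩ := Finset.exists_min_image
    (Finset.univ.filter fun h => I.adj x h) (I.rank x)
    ⟨I.lastResort x, by simp [I.lastResort_adj x]⟩
  exact ⟨h, by simpa using hh, fun h' hh' => hmin h' (by simp [hh'])⟩

private lemma morePopular_of [Fintype A] (I : CHAInstance A H) {M M' : Set (A × H)}
    {G L : Set A} (hG : G ⊆ {x | Prefers I M' M x}) (hL : {x | Prefers I M M' x} ⊆ L)
    (hcard : L.ncard < G.ncard) : MorePopular I M' M := by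
  have h1 : Nat.card {x | Prefers I M M' x} ≤ L.ncard := by
    rw [Nat.card_coe_set_eq]; exact Set.ncard_le_ncard hL (Set.toFinite _)
  have h2 : G.ncard ≤ Nat.card {x | Prefers I M' M x} := by
    rw [Nat.card_coe_set_eq]; exact Set.ncard_le_ncard hG (Set.toFinite _)
  exact lt_of_le_of_lt h1 (lt_of_lt_of_le hcard h2)

private lemma first_lt {I : CHAInstance A H} {x : A} {h u : H}
    (hf : IsFirstChoice I x h) (hu : I.adj x u) (hne : u ≠ h) :
    I.rank x h < I.rank x u := by
  rcases lt_or_eq_of_le (hf.2 u hu) with hlt | heq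
  · exact hlt
  · exact absurd (I.rank_strict x u h hu hf.1 heq.symm) hne

/-- Saturation: if some agent with first choice `h` is matched elsewhere, then `h` is full. -/
private lemma sat_of_first [Fintype A] (I : CHAInstance A H) {M : Set (A × H)}
    (hM : IsPopular I M) {a : A} {src h : H} (haM : (a, src) ∈ M)
    (haf : IsFirstChoice I a h) (hne : src ≠ h) :
    I.cap h ≤ {x | (x, h) ∈ M}.ncard := by
  classical
  by_contra hlt
  push_neg at hlt
  have hm := hM.1
  set M' : Set (A × H) := insert (a, h) (M \ {(a, src)}) with hM'def
  have hmem : ∀ x u, (x, u) ∈ M' ↔ (x = a ∧ u = h) ∨ ((x, u) ∈ M ∧ ¬(x = a ∧ u = src)) := by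
    intro x u
    simp [hM'def, Prod.ext_iff]
  have hranklt : I.rank a h < I.rank a src :=
    first_lt haf (hm.1 _ haM) hne
  have haonly : ∀ u, (a, u) ∈ M' → u = h := by
    intro u hu
    rcases (hmem a u).1 hu with ⟨_, e⟩ | ⟨huM, hnot⟩
    · exact e
    · exact absurd ⟨rfl, matched_eq hm huM haM⟩ hnot
  have hother : ∀ x u, x ≠ a → ((x, u) ∈ M' ↔ (x, u) ∈ M) := by
    intro x u hx
    rw [hmem]
    constructor
    · rintro (⟨e, _⟩ | ⟨huM, _⟩)
      · exact absurd e hx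
      · exact huM
    · intro huM; exact Or.inr ⟨huM, fun e => hx e.1⟩
  have hmatch' : I.IsMatching M' := by
    refine ⟨?_, ?_, ?_⟩
    · rintro ⟨x, u⟩ hp
      rcases (hmem x u).1 hp with ⟨e1, e2⟩ | ⟨huM, _⟩
      · subst e1; subst e2; exact haf.1
      · exact hm.1 _ huM
    · rintro ⟨x, u⟩ hp ⟨y, v⟩ hq hxy
      simp only at hxy; subst hxy
      by_cases hx : x = a
      · subst hx
        rw [haonly u hp, haonly v hq]
      · rw [hother x u hx] at hp
        rw [hother x v hx] at hq
        exact hm.2.1 _ hp _ hq rfl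
    · intro u
      by_cases hu : u = h
      · subst hu
        have hset : {x | (x, u) ∈ M'} = insert a {x | (x, u) ∈ M} := by
          ext x
          simp only [Set.mem_setOf_eq, hmem, Set.mem_insert_iff]
          constructor
          · rintro (⟨e, _⟩ | ⟨huM, _⟩)
            · exact Or.inl e
            · exact Or.inr huM
          · rintro (e | huM)
            · exact Or.inl ⟨e, trivial⟩
            · exact Or.inr ⟨huM, fun e2 => hne e2.2.symm⟩
        rw [hset]
        calc (insert a {x | (x, u) ∈ M}).ncard ≤ {x | (x, u) ∈ M}.ncard + 1 :=
              Set.ncard_insert_le _ _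
          _ ≤ I.cap u := hlt
      · have hsub : {x | (x, u) ∈ M'} ⊆ {x | (x, u) ∈ M} := by
          intro x hx
          rcases (hmem x u).1 hx with ⟨_, e⟩ | ⟨huM, _⟩
          · exact absurd e hu
          · exact huM
        exact le_trans (Set.ncard_le_ncard hsub (Set.toFinite _)) (hm.2.2 u)
  have hpop : MorePopular I M' M := by
    refine morePopular_of I (G := {a}) (L := ∅) ?_ ?_ ?_
    · rintro x rfl
      refine ⟨h, (hmem x h).2 (Or.inl ⟨rfl, rfl⟩), fun u hu => ?_⟩
      rw [matched_eq hm hu haM]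
      exact hranklt
    · rintro x ⟨u, huM, hpref⟩
      by_cases hx : x = a
      · subst hx
        have : u = src := matched_eq hm huM haM
        subst this
        have := hpref h ((hmem x h).2 (Or.inl ⟨rfl, rfl⟩))
        omega
      · have := hpref u ((hother x u hx).2 huM)
        omega
    · simp
  exact hM.2 M' hmatch' hpop


/-- Exchange with two agents: `a` moves to its first choice `h`, `c` moves to its
first choice `t`, where `t` is either `a`'s vacated house or has room. -/
private lemma swap2_morePopular [Fintype A] (I : CHAInstance A H) {M : Set (A × H)}
    (hm : I.IsMatching M) {a c : A} {src h t : H}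
    (haM : (a, src) ∈ M) (hcM : (c, h) ∈ M)
    (haf : IsFirstChoice I a h) (hct : IsFirstChoice I c t)
    (hne : src ≠ h) (hth : t ≠ h) (hca : c ≠ a)
    (hroom : t = src ∨ {x | (x, t) ∈ M}.ncard < I.cap t) :
    ∃ M', I.IsMatching M' ∧ MorePopular I M' M := by
  classical
  have hranka : I.rank a h < I.rank a src := first_lt haf (hm.1 _ haM) hne
  have hrankc : I.rank c t < I.rank c h := first_lt hct (hm.1 _ hcM) (Ne.symm hth)
  have hanotinh : (a, h) ∉ M := fun hah => hne (matched_eq hm haM hah)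
  have hcnotint : (c, t) ∉ M := fun hctM => hth (matched_eq hm hctM hcM)
  set M' : Set (A × H) := insert (a, h) (insert (c, t) (M \ {(a, src), (c, h)})) with hM'def
  have hmem : ∀ x u, (x, u) ∈ M' ↔
      (x = a ∧ u = h) ∨ (x = c ∧ u = t) ∨
        ((x, u) ∈ M ∧ ¬(x = a ∧ u = src) ∧ ¬(x = c ∧ u = h)) := by
    intro x u
    simp only [hM'def, Set.mem_insert_iff, Set.mem_diff, Prod.mk.injEq,
      Set.mem_singleton_iff]
    tauto
  have haonly : ∀ u, (a, u) ∈ M' → u = h := by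
    intro u hu
    rcases (hmem a u).1 hu with ⟨_, e⟩ | ⟨e, _⟩ | ⟨huM, hn1, _⟩
    · exact e
    · exact absurd e.symm hca
    · exact absurd ⟨rfl, matched_eq hm huM haM⟩ hn1
  have hconly : ∀ u, (c, u) ∈ M' → u = t := by
    intro u hu
    rcases (hmem c u).1 hu with ⟨e, _⟩ | ⟨_, e⟩ | ⟨huM, _, hn2⟩
    · exact absurd e hca
    · exact e
    · exact absurd ⟨rfl, matched_eq hm huM hcM⟩ hn2
  have hother : ∀ x u, x ≠ a → x ≠ c → ((x, u) ∈ M' ↔ (x, u) ∈ M) := by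
    intro x u hxa hxc
    rw [hmem]
    constructor
    · rintro (⟨e, _⟩ | ⟨e, _⟩ | ⟨huM, _⟩)
      · exact absurd e hxa
      · exact absurd e hxc
      · exact huM
    · intro huM
      exact Or.inr (Or.inr ⟨huM, fun e => hxa e.1, fun e => hxc e.1⟩)
  have hseth : {x | (x, h) ∈ M'} = insert a ({x | (x, h) ∈ M} \ {c}) := by
    ext x
    simp only [Set.mem_setOf_eq, hmem, Set.mem_insert_iff, Set.mem_diff,
      Set.mem_singleton_iff]
    constructor
    · rintro (⟨e, _⟩ | ⟨_, e⟩ | ⟨huM, _, hn2⟩)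
      · exact Or.inl e
      · exact absurd e.symm hth
      · exact Or.inr ⟨huM, fun e => hn2 ⟨e, trivial⟩⟩
    · rintro (e | ⟨huM, hxc⟩)
      · exact Or.inl ⟨e, trivial⟩
      · exact Or.inr (Or.inr ⟨huM, fun e => hne e.2.symm, fun e => hxc e.1⟩)
  have hmatch' : I.IsMatching M' := by
    refine ⟨?_, ?_, ?_⟩
    · rintro ⟨x, u⟩ hp
      rcases (hmem x u).1 hp with ⟨e1, e2⟩ | ⟨e1, e2⟩ | ⟨huM, _⟩
      · subst e1; subst e2; exact haf.1
      · subst e1; subst e2; exact hct.1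
      · exact hm.1 _ huM
    · rintro ⟨x, u⟩ hp ⟨y, v⟩ hq hxy
      simp only at hxy; subst hxy
      by_cases hx : x = a
      · subst hx; rw [haonly u hp, haonly v hq]
      · by_cases hx' : x = c
        · subst hx'; rw [hconly u hp, hconly v hq]
        · rw [hother x u hx hx'] at hp
          rw [hother x v hx hx'] at hq
          exact hm.2.1 _ hp _ hq rfl
    · intro u
      by_cases hu : u = h
      · subst hu
        rw [hseth, Set.ncard_insert_of_notMem (by simp [hanotinh]) (Set.toFinite _),
          Set.ncard_diff_singleton_add_one (s := {x | (x, u) ∈ M}) hcM (Set.toFinite _)]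
        exact hm.2.2 u
      · by_cases hu' : u = t
        · subst hu'
          rcases hroom with rfl | hlt
          · -- t = src : occupants of t in M' are (M(t) \ {a}) ∪ {c}
            have hset : {x | (x, u) ∈ M'} = insert c ({x | (x, u) ∈ M} \ {a}) := by
              ext x
              simp only [Set.mem_setOf_eq, hmem, Set.mem_insert_iff, Set.mem_diff,
                Set.mem_singleton_iff]
              constructor
              · rintro (⟨_, e⟩ | ⟨e, _⟩ | ⟨huM, hn1, _⟩)
                · exact absurd e hu
                · exact Or.inl e
                · exact Or.inr ⟨huM, fun e => hn1 ⟨e, trivial⟩⟩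
              · rintro (e | ⟨huM, hxa⟩)
                · exact Or.inr (Or.inl ⟨e, trivial⟩)
                · exact Or.inr (Or.inr ⟨huM, fun e => hxa e.1, fun e => hu e.2⟩)
            rw [hset, Set.ncard_insert_of_notMem (by simp [hcnotint]) (Set.toFinite _),
              Set.ncard_diff_singleton_add_one (s := {x | (x, u) ∈ M}) haM (Set.toFinite _)]
            exact hm.2.2 u
          · have hsub : {x | (x, u) ∈ M'} ⊆ insert c {x | (x, u) ∈ M} := by
              intro x hx
              rcases (hmem x u).1 hx with ⟨_, e⟩ | ⟨e, _⟩ | ⟨huM, _⟩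
              · exact absurd e hu
              · exact Set.mem_insert_iff.2 (Or.inl e)
              · exact Set.mem_insert_iff.2 (Or.inr huM)
            calc {x | (x, u) ∈ M'}.ncard ≤ (insert c {x | (x, u) ∈ M}).ncard :=
                  Set.ncard_le_ncard hsub (Set.toFinite _)
              _ ≤ {x | (x, u) ∈ M}.ncard + 1 := Set.ncard_insert_le _ _
              _ ≤ I.cap u := hlt
        · have hsub : {x | (x, u) ∈ M'} ⊆ {x | (x, u) ∈ M} := by
            intro x hx
            rcases (hmem x u).1 hx with ⟨_, e⟩ | ⟨_, e⟩ | ⟨huM, _⟩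
            · exact absurd e hu
            · exact absurd e hu'
            · exact huM
          exact le_trans (Set.ncard_le_ncard hsub (Set.toFinite _)) (hm.2.2 u)
  refine ⟨M', hmatch', ?_⟩
  refine morePopular_of I (G := {a, c}) (L := ∅) ?_ ?_ ?_
  · rintro x (rfl | rfl)
    · refine ⟨h, (hmem x h).2 (Or.inl ⟨rfl, rfl⟩), fun u hu => ?_⟩
      rw [matched_eq hm hu haM]
      exact hranka
    · refine ⟨t, (hmem x t).2 (Or.inr (Or.inl ⟨rfl, rfl⟩)), fun u hu => ?_⟩
      rw [matched_eq hm hu hcM]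
      exact hrankc
  · rintro x ⟨u, huM, hpref⟩
    by_cases hx : x = a
    · subst hx
      have : u = src := matched_eq hm huM haM
      subst this
      have := hpref h ((hmem x h).2 (Or.inl ⟨rfl, rfl⟩))
      omega
    · by_cases hx' : x = c
      · subst hx'
        have : u = h := matched_eq hm huM hcM
        subst this
        have := hpref t ((hmem x t).2 (Or.inr (Or.inl ⟨rfl, rfl⟩)))
        omega
      · have := hpref u ((hother x u hx hx').2 huM)
        omega
  · rw [Set.ncard_empty, Set.ncard_pair (Ne.symm hca)]
    omega

set_option maxHeartbeats 1000000 in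
/-- Exchange with three agents: `a` moves to its first choice `h`, `c` moves to its
first choice `t`, and `d`, an occupant of `t`, is demoted to its last resort. -/
private lemma swap3_morePopular [Fintype A] (I : CHAInstance A H) {M : Set (A × H)}
    (hm : I.IsMatching M) {a c d : A} {src h t : H}
    (haM : (a, src) ∈ M) (hcM : (c, h) ∈ M) (hdM : (d, t) ∈ M)
    (haf : IsFirstChoice I a h) (hct : IsFirstChoice I c t)
    (hne : src ≠ h) (hth : t ≠ h) (hca : c ≠ a) (hts : t ≠ src) :
    ∃ M', I.IsMatching M' ∧ MorePopular I M' M := by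
  classical
  have hranka : I.rank a h < I.rank a src := first_lt haf (hm.1 _ haM) hne
  have hrankc : I.rank c t < I.rank c h := first_lt hct (hm.1 _ hcM) (Ne.symm hth)
  have hanotinh : (a, h) ∉ M := fun hah => hne (matched_eq hm haM hah)
  have hda : d ≠ a := fun e => hts (matched_eq hm (e ▸ hdM) haM)
  have hdc : d ≠ c := fun e => hth (matched_eq hm (e ▸ hdM) hcM)
  have htld : t ≠ I.lastResort d := fun e => hdc (I.lastResort_only d c (e ▸ hct.1)).symm
  have hhld : h ≠ I.lastResort d := fun e => hda (I.lastResort_only d a (e ▸ haf.1)).symm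
  have hsld : src ≠ I.lastResort d :=
    fun e => hda (I.lastResort_only d a (e ▸ hm.1 _ haM)).symm
  have hldempty : {x | (x, I.lastResort d) ∈ M} = ∅ := by
    ext x
    simp only [Set.mem_setOf_eq, Set.mem_empty_iff_false, iff_false]
    intro hx
    have hxd : x = d := I.lastResort_only d x (hm.1 _ hx)
    subst hxd
    exact htld (matched_eq hm hdM hx)
  have hrankd : I.rank d t < I.rank d (I.lastResort d) :=
    I.lastResort_worst d t (hm.1 _ hdM) htld
  set ld := I.lastResort d with hlddef
  set M' : Set (A × H) :=
    insert (a, h) (insert (c, t) (insert (d, ld) (M \ {(a, src), (c, h), (d, t)})))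
    with hM'def
  have hmem : ∀ x u, (x, u) ∈ M' ↔
      (x = a ∧ u = h) ∨ (x = c ∧ u = t) ∨ (x = d ∧ u = ld) ∨
        ((x, u) ∈ M ∧ ¬(x = a ∧ u = src) ∧ ¬(x = c ∧ u = h) ∧ ¬(x = d ∧ u = t)) := by
    intro x u
    simp only [hM'def, Set.mem_insert_iff, Set.mem_diff, Prod.mk.injEq,
      Set.mem_singleton_iff]
    tauto
  have haonly : ∀ u, (a, u) ∈ M' → u = h := by
    intro u hu
    rcases (hmem a u).1 hu with ⟨_, e⟩ | ⟨e, _⟩ | ⟨e, _⟩ | ⟨huM, hn1, _⟩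
    · exact e
    · exact absurd e.symm hca
    · exact absurd e.symm hda
    · exact absurd ⟨rfl, matched_eq hm huM haM⟩ hn1
  have hconly : ∀ u, (c, u) ∈ M' → u = t := by
    intro u hu
    rcases (hmem c u).1 hu with ⟨e, _⟩ | ⟨_, e⟩ | ⟨e, _⟩ | ⟨huM, _, hn2, _⟩
    · exact absurd e hca
    · exact e
    · exact absurd e.symm hdc
    · exact absurd ⟨rfl, matched_eq hm huM hcM⟩ hn2
  have hdonly : ∀ u, (d, u) ∈ M' → u = ld := by
    intro u hu
    rcases (hmem d u).1 hu with ⟨e, _⟩ | ⟨e, _⟩ | ⟨_, e⟩ | ⟨huM, _, _, hn3⟩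
    · exact absurd e hda
    · exact absurd e hdc
    · exact e
    · exact absurd ⟨rfl, matched_eq hm huM hdM⟩ hn3
  have hother : ∀ x u, x ≠ a → x ≠ c → x ≠ d → ((x, u) ∈ M' ↔ (x, u) ∈ M) := by
    intro x u hxa hxc hxd
    rw [hmem]
    constructor
    · rintro (⟨e, _⟩ | ⟨e, _⟩ | ⟨e, _⟩ | ⟨huM, _⟩)
      · exact absurd e hxa
      · exact absurd e hxc
      · exact absurd e hxd
      · exact huM
    · intro huM
      exact Or.inr (Or.inr (Or.inr
        ⟨huM, fun e => hxa e.1, fun e => hxc e.1, fun e => hxd e.1⟩))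
  have hmatch' : I.IsMatching M' := by
    refine ⟨?_, ?_, ?_⟩
    · rintro ⟨x, u⟩ hp
      rcases (hmem x u).1 hp with ⟨e1, e2⟩ | ⟨e1, e2⟩ | ⟨e1, e2⟩ | ⟨huM, _⟩
      · subst e1; subst e2; exact haf.1
      · subst e1; subst e2; exact hct.1
      · rw [e1, e2, hlddef]; exact I.lastResort_adj d
      · exact hm.1 _ huM
    · rintro ⟨x, u⟩ hp ⟨y, v⟩ hq hxy
      simp only at hxy; subst hxy
      by_cases hx : x = a
      · subst hx; rw [haonly u hp, haonly v hq]
      · by_cases hx' : x = c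
        · subst hx'; rw [hconly u hp, hconly v hq]
        · by_cases hx'' : x = d
          · subst hx''; rw [hdonly u hp, hdonly v hq]
          · rw [hother x u hx hx' hx''] at hp
            rw [hother x v hx hx' hx''] at hq
            exact hm.2.1 _ hp _ hq rfl
    · intro u
      by_cases hu : u = h
      · rw [hu]
        have hset : {x | (x, h) ∈ M'} = insert a ({x | (x, h) ∈ M} \ {c}) := by
          ext x
          simp only [Set.mem_setOf_eq, hmem, Set.mem_insert_iff, Set.mem_diff,
            Set.mem_singleton_iff]
          constructor
          · rintro (⟨e, _⟩ | ⟨_, e⟩ | ⟨_, e⟩ | ⟨huM, _, hn2, _⟩)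
            · exact Or.inl e
            · exact absurd e.symm hth
            · exact absurd e hhld
            · exact Or.inr ⟨huM, fun e => hn2 ⟨e, trivial⟩⟩
          · rintro (e | ⟨huM, hxc⟩)
            · exact Or.inl ⟨e, trivial⟩
            · refine Or.inr (Or.inr (Or.inr
                ⟨huM, fun e => hne e.2.symm, fun e => hxc e.1, fun e => hth e.2.symm⟩))
        rw [hset, Set.ncard_insert_of_notMem (by simp [hanotinh]) (Set.toFinite _),
          Set.ncard_diff_singleton_add_one (s := {x | (x, h) ∈ M}) hcM (Set.toFinite _)]
        exact hm.2.2 h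
      · by_cases hu' : u = t
        · rw [hu']
          have hset : {x | (x, t) ∈ M'} = insert c ({x | (x, t) ∈ M} \ {d}) := by
            ext x
            simp only [Set.mem_setOf_eq, hmem, Set.mem_insert_iff, Set.mem_diff,
              Set.mem_singleton_iff]
            constructor
            · rintro (⟨_, e⟩ | ⟨e, _⟩ | ⟨_, e⟩ | ⟨huM, _, _, hn3⟩)
              · exact absurd e hth
              · exact Or.inl e
              · exact absurd e htld
              · exact Or.inr ⟨huM, fun e => hn3 ⟨e, trivial⟩⟩
            · rintro (e | ⟨huM, hxd⟩)
              · exact Or.inr (Or.inl ⟨e, trivial⟩)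
              · refine Or.inr (Or.inr (Or.inr
                  ⟨huM, fun e => hts e.2, fun e => hth e.2, fun e => hxd e.1⟩))
          rw [hset, Set.ncard_insert_of_notMem (by
              simp only [Set.mem_diff, Set.mem_setOf_eq, Set.mem_singleton_iff, not_and]
              intro hctM
              exact absurd (matched_eq hm hctM hcM) hth) (Set.toFinite _),
            Set.ncard_diff_singleton_add_one (s := {x | (x, t) ∈ M}) hdM (Set.toFinite _)]
          exact hm.2.2 t
        · by_cases hu'' : u = ld
          · rw [hu'']
            have hset : {x | (x, ld) ∈ M'} = {d} := by
              ext x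
              simp only [Set.mem_setOf_eq, hmem, Set.mem_singleton_iff]
              constructor
              · rintro (⟨_, e⟩ | ⟨_, e⟩ | ⟨e, _⟩ | ⟨huM, _⟩)
                · exact absurd e.symm hhld
                · exact absurd e.symm htld
                · exact e
                · have hx : x ∈ ({x | (x, ld) ∈ M} : Set A) := huM
                  rw [hldempty] at hx
                  exact absurd hx (Set.notMem_empty x)
              · rintro rfl
                exact Or.inr (Or.inr (Or.inl ⟨rfl, trivial⟩))
            rw [hset, Set.ncard_singleton, hlddef]
            exact (I.lastResort_cap d).ge
          · have hsub : {x | (x, u) ∈ M'} ⊆ {x | (x, u) ∈ M} := by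
              intro x hx
              rcases (hmem x u).1 hx with ⟨_, e⟩ | ⟨_, e⟩ | ⟨_, e⟩ | ⟨huM, _⟩
              · exact absurd e hu
              · exact absurd e hu'
              · exact absurd e hu''
              · exact huM
            exact le_trans (Set.ncard_le_ncard hsub (Set.toFinite _)) (hm.2.2 u)
  refine ⟨M', hmatch', ?_⟩
  refine morePopular_of I (G := {a, c}) (L := {d}) ?_ ?_ ?_
  · rintro x (rfl | rfl)
    · refine ⟨h, (hmem x h).2 (Or.inl ⟨rfl, rfl⟩), fun u hu => ?_⟩
      rw [matched_eq hm hu haM]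
      exact hranka
    · refine ⟨t, (hmem x t).2 (Or.inr (Or.inl ⟨rfl, rfl⟩)), fun u hu => ?_⟩
      rw [matched_eq hm hu hcM]
      exact hrankc
  · rintro x ⟨u, huM, hpref⟩
    by_cases hxd : x = d
    · exact hxd
    · exfalso
      by_cases hx : x = a
      · subst hx
        have : u = src := matched_eq hm huM haM
        subst this
        have := hpref h ((hmem x h).2 (Or.inl ⟨rfl, rfl⟩))
        omega
      · by_cases hx' : x = c
        · subst hx'
          have : u = h := matched_eq hm huM hcM
          subst this
          have := hpref t ((hmem x t).2 (Or.inr (Or.inl ⟨rfl, rfl⟩)))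
          omega
        · have := hpref u ((hother x u hx hx' hxd).2 huM)
          omega
  · rw [Set.ncard_singleton, Set.ncard_pair (Ne.symm hca)]
    omega


/-- All occupants of `h` have it as first choice, if some agent with first choice `h`
is matched elsewhere. -/
private lemma allf_of_first [Fintype A] [Fintype H] (I : CHAInstance A H) {M : Set (A × H)}
    (hM : IsPopular I M) {a : A} {src h : H} (haM : (a, src) ∈ M)
    (haf : IsFirstChoice I a h) (hne : src ≠ h) :
    ∀ c, (c, h) ∈ M → IsFirstChoice I c h := by
  classical
  intro c hcM
  by_contra hcf
  have hm := hM.1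
  obtain ⟨t, hct⟩ := exists_first I c
  have hth : t ≠ h := fun e => hcf (e ▸ hct)
  have hca : c ≠ a := by
    rintro rfl
    exact hne (matched_eq hm haM hcM)
  have hranka : I.rank a h < I.rank a src := first_lt haf (hm.1 _ haM) hne
  have hrankc : I.rank c t < I.rank c h := first_lt hct (hm.1 _ hcM) (Ne.symm hth)
  have hanotinh : (a, h) ∉ M := fun hah => hne (matched_eq hm haM hah)
  by_cases hts : t = src
  · obtain ⟨M', hmatch', hpop⟩ :=
      swap2_morePopular I hm haM hcM haf hct hne hth hca (Or.inl hts)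
    exact hM.2 M' hmatch' hpop
  · by_cases hroom : {x | (x, t) ∈ M}.ncard < I.cap t
    · obtain ⟨M', hmatch', hpop⟩ :=
        swap2_morePopular I hm haM hcM haf hct hne hth hca (Or.inr hroom)
      exact hM.2 M' hmatch' hpop
    · push_neg at hroom
      have hnonempty : {x | (x, t) ∈ M}.Nonempty := by
        apply Set.nonempty_of_ncard_ne_zero
        have := I.cap_pos t
        omega
      obtain ⟨d, hdM⟩ := hnonempty
      obtain ⟨M', hmatch', hpop⟩ :=
        swap3_morePopular I hm haM hcM hdM haf hct hne hth hca hts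
      exact hM.2 M' hmatch' hpop

end Aux

open CHAInstance in
/-- Property 5: in the switching graph of a CHA instance with respect to
a popular matching `M`, if a vertex `h` has at least one incoming edge of weight `+1`,
then all its outgoing edges have weight `-1` and it has no incoming edge of weight
`-1`. -/
theorem switchingGraph_incoming_plusOne_structure
    {A H : Type*} [Fintype A] [Fintype H] (I : CHAInstance A H)
    (M : Set (A × H)) (hM : IsPopular I M) (h : H)
    (hin : ∃ (a : A) (src : H), SwEdge I M a src h 1) :
    (∀ (a : A) (tgt : H) (w : ℤ), SwEdge I M a h tgt w → w = -1) ∧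
      (∀ (a : A) (src : H), ¬ SwEdge I M a src h (-1)) := by
  obtain ⟨a, src, haM, hbr⟩ := hin
  have hafs : IsFirstChoice I a h ∧ IsSecondChoice I a src := by
    rcases hbr with ⟨_, _, hw⟩ | ⟨hs, hf, _⟩
    · exact absurd hw (by norm_num)
    · exact ⟨hf, hs⟩
  obtain ⟨haf, has⟩ := hafs
  have hfh : IsFHouse I h := ⟨a, haf⟩
  have hne : src ≠ h := by
    rintro rfl
    rcases has.2.1 with hnf | ⟨hnfc, _⟩
    · exact hnf hfh
    · exact hnfc haf
  have hsat := sat_of_first I hM haM haf hne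
  have hall := allf_of_first I hM haM haf hne
  have hfcard : I.cap h ≤ (fSet I h).ncard := by
    refine le_trans hsat (Set.ncard_le_ncard ?_ (Set.toFinite _))
    intro x hx
    exact hall x hx
  constructor
  · rintro b tgt w ⟨hbM, hbr'⟩
    rcases hbr' with ⟨_, _, hw⟩ | ⟨hs, _, _⟩
    · exact hw
    · exfalso
      rcases hs.2.1 with hnf | ⟨hnfc, _⟩
      · exact hnf hfh
      · exact hnfc (hall b hbM)
  · rintro b src' ⟨hbM, hbr'⟩
    rcases hbr' with ⟨_, hs, _⟩ | ⟨_, _, hw⟩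
    · rcases hs.2.1 with hnf | ⟨_, hlt⟩
      · exact hnf hfh
      · omega
    · exact absurd hw (by norm_num)
end

section
/- Let M and M' be two popular matchings of a CHA instance I, with switching graphs G_M and G_{M'}, and let S be the set of edges of G_M whose direction is reversed in G_{M'}. Then every directed cycle contained in S is a switching cycle of G_M, i.e., an even-length directed cycle whose edge weights alternate between +1 and −1. -/
/-- A directed weighted edge of a switching graph, labelled by the agent that
contributes it. -/
structure DirEdge (A H : Type*) where
  agent : A
  src : H
  tgt : H
  wt : ℤ

namespace CHAInstance

variable {A H : Type*}

/-- `e` is an edge of the switching graph `G_M`. -/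
def ValidEdge (I : CHAInstance A H) (M : Set (A × H)) (e : DirEdge A H) : Prop :=
  SwEdge I M e.agent e.src e.tgt e.wt

/-- Consecutive edges of the list are head-to-tail. -/
def ChainOK (l : List (DirEdge A H)) : Prop :=
  ∀ (i : ℕ) (h : i + 1 < l.length),
    (l.get ⟨i, Nat.lt_of_succ_lt h⟩).tgt = (l.get ⟨i + 1, h⟩).src

/-- Consecutive edges of the list have alternating (opposite) weights. -/
def AltWt (l : List (DirEdge A H)) : Prop :=
  ∀ (i : ℕ) (h : i + 1 < l.length),
    (l.get ⟨i + 1, h⟩).wt = -(l.get ⟨i, Nat.lt_of_succ_lt h⟩).wt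

/-- The list of vertices visited by a list of head-to-tail edges. -/
def PathVerts (l : List (DirEdge A H)) : List H :=
  l.map (·.src) ++ (l.getLast?.map (·.tgt)).toList

/-- A (nonempty) directed path in the switching graph `G_M`: head-to-tail edges of
`G_M` visiting pairwise distinct vertices. -/
def IsDirPath (I : CHAInstance A H) (M : Set (A × H)) (l : List (DirEdge A H)) : Prop :=
  l ≠ [] ∧ (∀ e ∈ l, ValidEdge I M e) ∧ ChainOK l ∧ (PathVerts l).Nodup

/-- An alternating path of `G_M`: a directed path that starts with a `+1` edge, ends
with a `-1` edge, and alternates between `+1` and `-1` edges. -/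
def IsAlternatingPath (I : CHAInstance A H) (M : Set (A × H))
    (l : List (DirEdge A H)) : Prop :=
  IsDirPath I M l ∧ AltWt l ∧
    (∀ e, l.head? = some e → e.wt = 1) ∧ (∀ e, l.getLast? = some e → e.wt = -1)

/-- A switching path of `G_M`: an alternating path ending at an unsaturated vertex. -/
def IsSwitchingPath (I : CHAInstance A H) (M : Set (A × H))
    (l : List (DirEdge A H)) : Prop :=
  IsAlternatingPath I M l ∧ ∀ e, l.getLast? = some e → 0 < unsatDeg I M e.tgt

/-- A directed cycle in the switching graph `G_M`: head-to-tail edges of `G_M`, closing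
up cyclically, visiting pairwise distinct vertices. -/
def IsDirCycle (I : CHAInstance A H) (M : Set (A × H)) (l : List (DirEdge A H)) : Prop :=
  l ≠ [] ∧ (∀ e ∈ l, ValidEdge I M e) ∧ ChainOK l ∧
    (∀ e f, l.getLast? = some e → l.head? = some f → e.tgt = f.src) ∧
    (l.map (·.src)).Nodup

/-- A switching cycle of `G_M`: an even-length directed cycle whose edge weights
alternate (cyclically) between `-1` and `+1`. -/
def IsSwitchingCycle (I : CHAInstance A H) (M : Set (A × H))
    (l : List (DirEdge A H)) : Prop :=
  IsDirCycle I M l ∧ Even l.length ∧ AltWt l ∧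
    (∀ e f, l.getLast? = some e → l.head? = some f → f.wt = -e.wt)

open scoped Classical in
/-- A switching set of `G_M`, given as a finite list of pieces: each piece is a
switching path or a switching cycle, the pieces are pairwise edge-disjoint, and at most
`k` of the switching paths end at any vertex of unsaturation degree `k`. -/
noncomputable def IsSwitchingSet (I : CHAInstance A H) (M : Set (A × H))
    (S : List (List (DirEdge A H))) : Prop :=
  (∀ l ∈ S, IsSwitchingPath I M l ∨ IsSwitchingCycle I M l) ∧
    S.Pairwise (fun l₁ l₂ => ∀ e ∈ l₁, e ∉ l₂) ∧
    ∀ h : H,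
      (S.countP (fun l => decide (IsSwitchingPath I M l ∧
        ∃ e, l.getLast? = some e ∧ e.tgt = h))) ≤ unsatDeg I M h

/-- The set of edges of `G_M` that are reversed (with flipped weight) in `G_{M'}`. -/
def ReversedEdges (I : CHAInstance A H) (M M' : Set (A × H)) : Set (DirEdge A H) :=
  {e | ValidEdge I M e ∧ SwEdge I M' e.agent e.tgt e.src (-e.wt)}

/-- The matching obtained from `M` by the switching move along the switching set `S`:
every agent whose edge lies in `S` is reassigned from the source to the target of its
edge; all other agents keep their assignment. -/
def SwitchingMove (M : Set (A × H)) (S : List (List (DirEdge A H))) : Set (A × H) :=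
  (M \ {p | ∃ l ∈ S, ∃ e ∈ l, p = (e.agent, e.src)}) ∪
    {p | ∃ l ∈ S, ∃ e ∈ l, p = (e.agent, e.tgt)}

end CHAInstance

section AuxProofs

open CHAInstance

variable {A H : Type*}

private lemma rank_lt_of_first {I : CHAInstance A H} {a : A} {h h' : H}
    (hf : IsFirstChoice I a h) (hadj : I.adj a h') (hne : h ≠ h') :
    I.rank a h < I.rank a h' :=
  lt_of_le_of_ne (hf.2 h' hadj) (fun e => hne (I.rank_strict a h h' hf.1 hadj e))

private lemma first_ne_second {I : CHAInstance A H} {a : A} {h X : H}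
    (hs : IsSecondChoice I a h) (hf : IsFirstChoice I a X) : X ≠ h := by
  rintro rfl
  rcases hs.2.1 with h1 | h1
  · exact h1 ⟨a, hf⟩
  · exact h1.1 hf

private lemma not_popular_helper [Fintype A] {I : CHAInstance A H} {N N' : Set (A × H)}
    (hm : IsMatching I N') {a b c0 : A} (hab : a ≠ b)
    (ha : Prefers I N' N a) (hb : Prefers I N' N b)
    (hc : ∀ d, Prefers I N N' d → d = c0) : ¬ IsPopular I N := by
  rintro ⟨-, hno⟩
  refine hno N' hm ?_
  unfold MorePopular
  have h1 : ({a, b} : Set A) ⊆ {d | Prefers I N' N d} := by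
    rintro d hd
    rcases hd with rfl | hd
    · exact ha
    · rcases hd with rfl; exact hb
  have h2 : ({d | Prefers I N N' d} : Set A) ⊆ {c0} := fun d hd => hc d hd
  have h3 := Set.ncard_le_ncard h1 (Set.toFinite _)
  rw [Set.ncard_pair hab] at h3
  have h4 := Set.ncard_le_ncard h2 (Set.toFinite _)
  rw [Set.ncard_singleton] at h4
  rw [Nat.card_coe_set_eq, Nat.card_coe_set_eq]
  omega

private lemma ncard_swap_le [Finite A] {S T : Set A} {x y : A} {k : ℕ}
    (hx : x ∈ S) (hT : T ⊆ insert y (S \ {x})) (hk : S.ncard ≤ k) : T.ncard ≤ k := by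
  have h1 : T.ncard ≤ (insert y (S \ {x})).ncard := Set.ncard_le_ncard hT (Set.toFinite _)
  have h2 : (insert y (S \ {x})).ncard ≤ (S \ {x}).ncard + 1 := Set.ncard_insert_le _ _
  have h3 : (S \ {x}).ncard + 1 = S.ncard := Set.ncard_diff_singleton_add_one hx (Set.toFinite _)
  omega

private lemma core_no_double [Fintype A] {I : CHAInstance A H} {N : Set (A × H)}
    (hN : IsMatching I N) {a b : A} {h yb X : H}
    (ha : (a, h) ∈ N) (hsa : IsSecondChoice I a h) (hfa : IsFirstChoice I a X)
    (hb : (b, yb) ∈ N) (hsb : IsSecondChoice I b yb) (hfb : IsFirstChoice I b h) :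
    ¬ IsPopular I N := by
  classical
  have funN : ∀ {d : A} {h1 h2 : H}, (d, h1) ∈ N → (d, h2) ∈ N → h1 = h2 := by
    intro d h1 h2 p q
    exact congrArg Prod.snd (hN.2.1 _ p _ q rfl)
  have hXh : X ≠ h := first_ne_second hsa hfa
  have hhyb : h ≠ yb := first_ne_second hsb hfb
  have hab : a ≠ b := by
    rintro rfl
    have h1 : I.rank a X ≤ I.rank a h := hfa.2 h hsa.1
    have h2 : I.rank a h ≤ I.rank a X := hfb.2 X hfa.1
    exact hXh (I.rank_strict a X h hfa.1 hsa.1 (le_antisymm h1 h2))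
  have hraX : I.rank a X < I.rank a h := rank_lt_of_first hfa hsa.1 hXh
  have hrbh : I.rank b h < I.rank b yb := rank_lt_of_first hfb hsb.1 hhyb
  by_cases hroom : ({d | (d, X) ∈ N ∧ (d, X) ≠ ((a, h) : A × H) ∧ (d, X) ≠ ((b, yb) : A × H)}).ncard < I.cap X
  · -- no eviction needed
    set N' : Set (A × H) :=
      (N \ {(a, h), (b, yb)}) ∪ {(a, X), (b, h)} with hN'def
    have memN' : ∀ p : A × H, p ∈ N' ↔
        ((p ∈ N ∧ p ≠ (a, h) ∧ p ≠ (b, yb)) ∨ p = (a, X) ∨ p = (b, h)) := by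
      intro p
      simp only [hN'def, Set.mem_union, Set.mem_diff, Set.mem_insert_iff,
        Set.mem_singleton_iff]
      tauto
    have hmatch : IsMatching I N' := by
      refine ⟨?_, ?_, ?_⟩
      · intro p hp
        rw [memN'] at hp
        rcases hp with ⟨hp, -, -⟩ | rfl | rfl
        · exact hN.1 p hp
        · exact hfa.1
        · exact hfb.1
      · rintro ⟨p1, p2⟩ hp ⟨q1, q2⟩ hq (he : p1 = q1)
        subst he
        rw [memN'] at hp hq
        rcases hp with ⟨hpN, hp1, hp2⟩ | hp | hp <;>
          rcases hq with ⟨hqN, hq1, hq2⟩ | hq | hq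
        · exact hN.2.1 _ hpN _ hqN rfl
        · have e1 : p1 = a := congrArg Prod.fst hq
          exact (hp1 (Prod.ext e1 (funN hpN (by rw [e1]; exact ha)))).elim
        · have e1 : p1 = b := congrArg Prod.fst hq
          exact (hp2 (Prod.ext e1 (funN hpN (by rw [e1]; exact hb)))).elim
        · have e1 : p1 = a := congrArg Prod.fst hp
          exact (hq1 (Prod.ext e1 (funN hqN (by rw [e1]; exact ha)))).elim
        · exact Prod.ext rfl ((congrArg Prod.snd hp).trans (congrArg Prod.snd hq).symm)
        · have e1 : p1 = a := congrArg Prod.fst hp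
          have e2 : p1 = b := congrArg Prod.fst hq
          exact absurd (e1.symm.trans e2) hab
        · have e1 : p1 = b := congrArg Prod.fst hp
          exact (hq2 (Prod.ext e1 (funN hqN (by rw [e1]; exact hb)))).elim
        · have e1 : p1 = a := congrArg Prod.fst hq
          have e2 : p1 = b := congrArg Prod.fst hp
          exact absurd (e1.symm.trans e2) hab
        · exact Prod.ext rfl ((congrArg Prod.snd hp).trans (congrArg Prod.snd hq).symm)
      · intro h0
        by_cases hX0 : h0 = X
        · subst hX0
          have hsubT : {d | (d, h0) ∈ N'} ⊆
              insert a {d | (d, h0) ∈ N ∧ (d, h0) ≠ ((a, h) : A × H) ∧ (d, h0) ≠ ((b, yb) : A × H)} := by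
            intro d hd
            rw [Set.mem_setOf_eq, memN'] at hd
            rw [Set.mem_insert_iff, Set.mem_setOf_eq]
            rcases hd with ⟨hdN, hd1, hd2⟩ | hd | hd
            · exact Or.inr ⟨hdN, hd1, hd2⟩
            · exact Or.inl (congrArg Prod.fst hd)
            · exact absurd (congrArg Prod.snd hd) hXh
          have := Set.ncard_le_ncard hsubT (Set.toFinite _)
          have h5 := Set.ncard_insert_le a
            {d | (d, h0) ∈ N ∧ (d, h0) ≠ ((a, h) : A × H) ∧ (d, h0) ≠ ((b, yb) : A × H)}
          omega
        · by_cases hh0 : h0 = h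
          · subst hh0
            refine ncard_swap_le (S := {d | (d, h0) ∈ N}) (x := a) (y := b) ha ?_ (hN.2.2 h0)
            intro d hd
            rw [Set.mem_setOf_eq, memN'] at hd
            rw [Set.mem_insert_iff, Set.mem_diff, Set.mem_setOf_eq, Set.mem_singleton_iff]
            rcases hd with ⟨hdN, hd1, -⟩ | hd | hd
            · exact Or.inr ⟨hdN, fun hda => hd1 (by rw [hda])⟩
            · exact absurd (congrArg Prod.snd hd) hXh.symm
            · exact Or.inl (congrArg Prod.fst hd)
          · refine le_trans (Set.ncard_le_ncard ?_ (Set.toFinite _)) (hN.2.2 h0)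
            intro d hd
            rw [Set.mem_setOf_eq, memN'] at hd
            rcases hd with ⟨hdN, -, -⟩ | hd | hd
            · exact hdN
            · exact absurd (congrArg Prod.snd hd) hX0
            · exact absurd (congrArg Prod.snd hd) hh0
    refine not_popular_helper hmatch hab ?_ ?_ (c0 := a) ?_
    · refine ⟨X, ?_, ?_⟩
      · rw [memN']; right; left; rfl
      · intro h' hh'
        have : h' = h := funN hh' ha
        subst this; exact hraX
    · refine ⟨h, ?_, ?_⟩
      · rw [memN']; right; right; rfl
      · intro h' hh'
        have : h' = yb := funN hh' hb
        subst this; exact hrbh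
    · rintro d ⟨h0, hd0, hlt⟩
      by_contra hda
      by_cases hdb : d = b
      · subst hdb
        have : h0 = yb := funN hd0 hb
        subst this
        have hbh : ((d, h) : A × H) ∈ N' := by rw [memN']; right; right; rfl
        exact absurd (hlt h hbh) (lt_asymm hrbh)
      · have : ((d, h0) : A × H) ∈ N' := by
          rw [memN']
          left
          exact ⟨hd0, fun e => hda (congrArg Prod.fst e), fun e => hdb (congrArg Prod.fst e)⟩
        exact lt_irrefl _ (hlt h0 this)
  · -- eviction: pick an agent c matched to X, move it to its last resort
    push_neg at hroom
    have hpos : 0 < ({d | (d, X) ∈ N ∧ (d, X) ≠ ((a, h) : A × H) ∧ (d, X) ≠ ((b, yb) : A × H)}).ncard :=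
      lt_of_lt_of_le (I.cap_pos X) hroom
    obtain ⟨c, hcN, hc1, hc2⟩ :=
      (Set.nonempty_of_ncard_ne_zero (by omega) :
        ({d | (d, X) ∈ N ∧ (d, X) ≠ ((a, h) : A × H) ∧ (d, X) ≠ ((b, yb) : A × H)}).Nonempty)
    have hca : c ≠ a := by rintro rfl; exact hXh (funN hcN ha)
    have hcb : c ≠ b := by
      rintro rfl
      exact hc2 (by rw [funN hcN hb])
    set lc := I.lastResort c with hlc
    have hlcX : lc ≠ X := by
      intro e
      exact hca (I.lastResort_only c a (by rw [← e] at hfa; exact hfa.1)).symm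
    have hlch : lc ≠ h := by
      intro e
      exact hca (I.lastResort_only c a (by rw [← e] at hsa; exact hsa.1)).symm
    have hlcyb : lc ≠ yb := by
      intro e
      exact hcb (I.lastResort_only c b (by rw [← e] at hsb; exact hsb.1)).symm
    have hadjclc : I.adj c lc := I.lastResort_adj c
    have hlcEmpty : ∀ d : A, ((d, lc) : A × H) ∈ N → False := by
      intro d hd
      have hdc : d = c := I.lastResort_only c d (hN.1 _ hd)
      subst hdc
      exact hlcX (funN hd hcN)
    set N' : Set (A × H) :=
      (N \ {(a, h), (b, yb), (c, X)}) ∪ {(a, X), (b, h), (c, lc)} with hN'def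
    have memN' : ∀ p : A × H, p ∈ N' ↔
        ((p ∈ N ∧ p ≠ (a, h) ∧ p ≠ (b, yb) ∧ p ≠ (c, X)) ∨
          p = (a, X) ∨ p = (b, h) ∨ p = (c, lc)) := by
      intro p
      simp only [hN'def, Set.mem_union, Set.mem_diff, Set.mem_insert_iff,
        Set.mem_singleton_iff]
      tauto
    have hmatch : IsMatching I N' := by
      refine ⟨?_, ?_, ?_⟩
      · intro p hp
        rw [memN'] at hp
        rcases hp with ⟨hp, -, -, -⟩ | rfl | rfl | rfl
        · exact hN.1 p hp
        · exact hfa.1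
        · exact hfb.1
        · exact hadjclc
      · rintro ⟨p1, p2⟩ hp ⟨q1, q2⟩ hq (he : p1 = q1)
        subst he
        rw [memN'] at hp hq
        rcases hp with ⟨hpN, hp1, hp2, hp3⟩ | hp | hp | hp <;>
          rcases hq with ⟨hqN, hq1, hq2, hq3⟩ | hq | hq | hq
        · exact hN.2.1 _ hpN _ hqN rfl
        · have e1 : p1 = a := congrArg Prod.fst hq
          exact (hp1 (Prod.ext e1 (funN hpN (by rw [e1]; exact ha)))).elim
        · have e1 : p1 = b := congrArg Prod.fst hq
          exact (hp2 (Prod.ext e1 (funN hpN (by rw [e1]; exact hb)))).elim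
        · have e1 : p1 = c := congrArg Prod.fst hq
          exact (hp3 (Prod.ext e1 (funN hpN (by rw [e1]; exact hcN)))).elim
        · have e1 : p1 = a := congrArg Prod.fst hp
          exact (hq1 (Prod.ext e1 (funN hqN (by rw [e1]; exact ha)))).elim
        · exact Prod.ext rfl ((congrArg Prod.snd hp).trans (congrArg Prod.snd hq).symm)
        · have e1 : p1 = a := congrArg Prod.fst hp
          have e2 : p1 = b := congrArg Prod.fst hq
          exact absurd (e1.symm.trans e2) hab
        · have e1 : p1 = c := congrArg Prod.fst hq
          have e2 : p1 = a := congrArg Prod.fst hp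
          exact absurd (e1.symm.trans e2) hca
        · have e1 : p1 = b := congrArg Prod.fst hp
          exact (hq2 (Prod.ext e1 (funN hqN (by rw [e1]; exact hb)))).elim
        · have e1 : p1 = a := congrArg Prod.fst hq
          have e2 : p1 = b := congrArg Prod.fst hp
          exact absurd (e1.symm.trans e2) hab
        · exact Prod.ext rfl ((congrArg Prod.snd hp).trans (congrArg Prod.snd hq).symm)
        · have e1 : p1 = c := congrArg Prod.fst hq
          have e2 : p1 = b := congrArg Prod.fst hp
          exact absurd (e1.symm.trans e2) hcb
        · have e1 : p1 = c := congrArg Prod.fst hp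
          exact (hq3 (Prod.ext e1 (funN hqN (by rw [e1]; exact hcN)))).elim
        · have e1 : p1 = c := congrArg Prod.fst hp
          have e2 : p1 = a := congrArg Prod.fst hq
          exact absurd (e1.symm.trans e2) hca
        · have e1 : p1 = c := congrArg Prod.fst hp
          have e2 : p1 = b := congrArg Prod.fst hq
          exact absurd (e1.symm.trans e2) hcb
        · exact Prod.ext rfl ((congrArg Prod.snd hp).trans (congrArg Prod.snd hq).symm)
      · intro h0
        by_cases hX0 : h0 = X
        · subst hX0
          refine ncard_swap_le (S := {d | (d, h0) ∈ N}) (x := c) (y := a) hcN ?_ (hN.2.2 h0)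
          intro d hd
          rw [Set.mem_setOf_eq, memN'] at hd
          rw [Set.mem_insert_iff, Set.mem_diff, Set.mem_setOf_eq, Set.mem_singleton_iff]
          rcases hd with ⟨hdN, -, -, hd3⟩ | hd | hd | hd
          · exact Or.inr ⟨hdN, fun hdc => hd3 (by rw [hdc])⟩
          · exact Or.inl (congrArg Prod.fst hd)
          · exact absurd (congrArg Prod.snd hd) hXh
          · exact absurd (congrArg Prod.snd hd) hlcX.symm
        · by_cases hh0 : h0 = h
          · subst hh0
            refine ncard_swap_le (S := {d | (d, h0) ∈ N}) (x := a) (y := b) ha ?_ (hN.2.2 h0)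
            intro d hd
            rw [Set.mem_setOf_eq, memN'] at hd
            rw [Set.mem_insert_iff, Set.mem_diff, Set.mem_setOf_eq, Set.mem_singleton_iff]
            rcases hd with ⟨hdN, hd1, -, -⟩ | hd | hd | hd
            · exact Or.inr ⟨hdN, fun hda => hd1 (by rw [hda])⟩
            · exact absurd (congrArg Prod.snd hd) hXh.symm
            · exact Or.inl (congrArg Prod.fst hd)
            · exact absurd (congrArg Prod.snd hd) hlch.symm
          · by_cases hlc0 : h0 = lc
            · have hsubT : {d | (d, h0) ∈ N'} ⊆ {c} := by
                intro d hd
                rw [Set.mem_setOf_eq, memN'] at hd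
                rw [Set.mem_singleton_iff]
                rcases hd with ⟨hdN, -, -, -⟩ | hd | hd | hd
                · exact ((hlcEmpty d (hlc0 ▸ hdN)).elim)
                · exact absurd (hlc0.symm.trans (congrArg Prod.snd hd)) hlcX
                · exact absurd (hlc0.symm.trans (congrArg Prod.snd hd)) hlch
                · exact congrArg Prod.fst hd
              have h5 := Set.ncard_le_ncard hsubT (Set.toFinite _)
              rw [Set.ncard_singleton] at h5
              have h6 : I.cap h0 = 1 := hlc0 ▸ I.lastResort_cap c
              omega
            · refine le_trans (Set.ncard_le_ncard ?_ (Set.toFinite _)) (hN.2.2 h0)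
              intro d hd
              rw [Set.mem_setOf_eq, memN'] at hd
              rcases hd with ⟨hdN, -, -, -⟩ | hd | hd | hd
              · exact hdN
              · exact absurd (congrArg Prod.snd hd) hX0
              · exact absurd (congrArg Prod.snd hd) hh0
              · exact absurd (congrArg Prod.snd hd) hlc0
    refine not_popular_helper hmatch hab ?_ ?_ (c0 := c) ?_
    · refine ⟨X, ?_, ?_⟩
      · rw [memN']; right; left; rfl
      · intro h' hh'
        have : h' = h := funN hh' ha
        subst this; exact hraX
    · refine ⟨h, ?_, ?_⟩
      · rw [memN']; right; right; left; rfl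
      · intro h' hh'
        have : h' = yb := funN hh' hb
        subst this; exact hrbh
    · rintro d ⟨h0, hd0, hlt⟩
      by_contra hdc
      by_cases hda : d = a
      · subst hda
        have : h0 = h := funN hd0 ha
        subst this
        have haX : ((d, X) : A × H) ∈ N' := by rw [memN']; right; left; rfl
        exact absurd (hlt X haX) (lt_asymm hraX)
      · by_cases hdb : d = b
        · subst hdb
          have : h0 = yb := funN hd0 hb
          subst this
          have hbh : ((d, h) : A × H) ∈ N' := by rw [memN']; right; right; left; rfl
          exact absurd (hlt h hbh) (lt_asymm hrbh)
        · have : ((d, h0) : A × H) ∈ N' := by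
            rw [memN']
            left
            exact ⟨hd0, fun e => hda (congrArg Prod.fst e),
              fun e => hdb (congrArg Prod.fst e), fun e => hdc (congrArg Prod.fst e)⟩
          exact lt_irrefl _ (hlt h0 this)

private lemma rev_consec [Fintype A] {I : CHAInstance A H} {M M' : Set (A × H)}
    (hM : IsPopular I M) (hM' : IsPopular I M') {e f : DirEdge A H}
    (he : e ∈ ReversedEdges I M M') (hf : f ∈ ReversedEdges I M M')
    (hst : e.tgt = f.src) : f.wt = -e.wt := by
  obtain ⟨heV, heR⟩ := he
  obtain ⟨hfV, hfR⟩ := hf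
  have hew : e.wt = -1 ∨ e.wt = 1 := by
    rcases heV.2 with ⟨-, -, h1⟩ | ⟨-, -, h1⟩
    · exact Or.inl h1
    · exact Or.inr h1
  have hfw : f.wt = -1 ∨ f.wt = 1 := by
    rcases hfV.2 with ⟨-, -, h1⟩ | ⟨-, -, h1⟩
    · exact Or.inl h1
    · exact Or.inr h1
  by_cases heq : f.wt = e.wt
  · exfalso
    rcases hew with h1 | h1
    · -- both weights -1 : contradiction with popularity of M'
      obtain ⟨heM', hd⟩ := heR
      rcases hd with ⟨-, -, hw⟩ | ⟨hs, hfc, -⟩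
      · rw [h1] at hw; norm_num at hw
      · obtain ⟨hfM', hd'⟩ := hfR
        rcases hd' with ⟨-, -, hw⟩ | ⟨hs', hfc', -⟩
        · rw [heq, h1] at hw; norm_num at hw
        · exact core_no_double hM'.1 heM' hs hfc hfM' hs'
            (by rw [hst]; exact hfc') hM'
    · -- both weights +1 : contradiction with popularity of M
      obtain ⟨heM, hd⟩ := heV
      rcases hd with ⟨-, -, hw⟩ | ⟨hs, hfc, -⟩
      · rw [h1] at hw; norm_num at hw
      · obtain ⟨hfM, hd'⟩ := hfV
        rcases hd' with ⟨-, -, hw⟩ | ⟨hs', hfc', -⟩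
        · rw [hw, h1] at heq; norm_num at heq
        · exact core_no_double hM.1 hfM hs' hfc' heM hs
            (by rw [← hst]; exact hfc) hM
  · rcases hew with h1 | h1 <;> rcases hfw with h2 | h2 <;> omega

open CHAInstance in
theorem dirCycle_in_reversedEdges_isSwitchingCycle'
    {A H : Type*} [Fintype A] [Fintype H] (I : CHAInstance A H)
    (M M' : Set (A × H)) (hM : IsPopular I M) (hM' : IsPopular I M')
    (l : List (DirEdge A H)) (hl : IsDirCycle I M l)
    (hsub : ∀ e ∈ l, e ∈ ReversedEdges I M M') :
    IsSwitchingCycle I M l := by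
  obtain ⟨hne, hval, hchain, hwrap, hnodup⟩ := hl
  have halt : AltWt l := by
    intro i hi
    exact rev_consec hM hM' (hsub _ (List.get_mem l ⟨i, Nat.lt_of_succ_lt hi⟩)) (hsub _ (List.get_mem l ⟨i+1, hi⟩))
      (hchain i hi)
  have hn : 0 < l.length := List.length_pos_iff.mpr hne
  have hn1 : l.length - 1 < l.length := by omega
  have hhead : l.head? = some (l.get ⟨0, hn⟩) := by
    rw [List.head?_eq_head hne]
    congr 1
    simp [List.get]
    cases l with
    | nil => exact absurd rfl hne
    | cons a t => rfl
  have hlast : l.getLast? = some (l.get ⟨l.length - 1, hn1⟩) := by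
    rw [List.getLast?_eq_getLast hne]
    congr 1
    exact List.getLast_eq_getElem hne
  have hwrapwt : ∀ e f, l.getLast? = some e → l.head? = some f → f.wt = -e.wt := by
    intro e f hle hhf
    have hel : e ∈ l := by
      have h2 : l.get ⟨l.length - 1, hn1⟩ = e := by
        rw [hlast] at hle; exact Option.some.inj hle
      rw [← h2]; exact List.get_mem l _
    have hfl : f ∈ l := by
      have h2 : l.get ⟨0, hn⟩ = f := by
        rw [hhead] at hhf; exact Option.some.inj hhf
      rw [← h2]; exact List.get_mem l _
    exact rev_consec hM hM' (hsub e hel) (hsub f hfl) (hwrap e f hle hhf)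
  refine ⟨⟨hne, hval, hchain, hwrap, hnodup⟩, ?_, halt, hwrapwt⟩
  have hwts : ∀ e ∈ l, e.wt = -1 ∨ e.wt = 1 := by
    intro e hel
    rcases (hsub e hel).1.2 with ⟨-, -, h1⟩ | ⟨-, -, h1⟩
    · exact Or.inl h1
    · exact Or.inr h1
  have key : ∀ (i : ℕ) (hi : i < l.length),
      (l.get ⟨i, hi⟩).wt = (-1 : ℤ)^i * (l.get ⟨0, hn⟩).wt := by
    intro i
    induction i with
    | zero => intro hi; simp
    | succ k ih =>
      intro hi
      have hk : k < l.length := Nat.lt_of_succ_lt hi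
      rw [halt k hi, ih hk, pow_succ]
      ring
  rcases Nat.even_or_odd l.length with he | ho
  · exact he
  · exfalso
    have h0 := key (l.length - 1) hn1
    have hev : Even (l.length - 1) := Nat.Odd.sub_odd ho odd_one
    rw [hev.neg_one_pow, one_mul] at h0
    have h1 := hwrapwt _ _ hlast hhead
    have hw0 := hwts _ (List.get_mem l ⟨0, hn⟩)
    rcases hw0 with h2 | h2 <;> omega

end AuxProofs

open CHAInstance in
/-- for two popular matchings `M`, `M'` of a CHA instance, every directed
cycle contained in the set `S` of edges of `G_M` reversed in `G_{M'}` is a switching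
cycle of `G_M`, i.e. an even-length directed cycle with alternating `+1`/`-1`
weights. -/
theorem dirCycle_in_reversedEdges_isSwitchingCycle
    {A H : Type*} [Fintype A] [Fintype H] (I : CHAInstance A H)
    (M M' : Set (A × H)) (hM : IsPopular I M) (hM' : IsPopular I M')
    (l : List (DirEdge A H)) (hl : IsDirCycle I M l)
    (hsub : ∀ e ∈ l, e ∈ ReversedEdges I M M') :
    IsSwitchingCycle I M l := by
  exact dirCycle_in_reversedEdges_isSwitchingCycle' I M M' hM hM' l hl hsub
end

section
/- Let G_M be the switching graph of a CHA instance I with respect to a popular matching M. Then every switching move on G_M (reversing the direction and flipping the weight of every edge of a switching set) produces the switching graph of another popular matching of I; that is, the matching M' in which each agent a whose edge lies in the switching set is reassigned from M(a) to the other element of {f(a), s(a)}, and all other agents keep their assignment, is a popular matching of I. -/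
namespace CHAInstance

variable {A H : Type*}

/-! ### Basic lemmas -/

lemma matched_unique {I : CHAInstance A H} {M : Set (A × H)} (hM : IsMatching I M)
    {a : A} {h h' : H} (h1 : (a, h) ∈ M) (h2 : (a, h') ∈ M) : h = h' :=
  congrArg Prod.snd (hM.2.1 _ h1 _ h2 rfl)

lemma first_unique {I : CHAInstance A H} {a : A} {h h' : H}
    (h1 : IsFirstChoice I a h) (h2 : IsFirstChoice I a h') : h = h' :=
  I.rank_strict a h h' h1.1 h2.1 (le_antisymm (h1.2 _ h2.1) (h2.2 _ h1.1))

lemma second_unique {I : CHAInstance A H} {a : A} {h h' : H}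
    (h1 : IsSecondChoice I a h) (h2 : IsSecondChoice I a h') : h = h' :=
  I.rank_strict a h h' h1.1 h2.1
    (le_antisymm (h1.2.2 _ h2.1 h2.2.1) (h2.2.2 _ h1.1 h1.2.1))

lemma rank_lt_of_first {I : CHAInstance A H} {a : A} {h h' : H}
    (h1 : IsFirstChoice I a h) (hadj : I.adj a h') (hne : h' ≠ h) :
    I.rank a h < I.rank a h' := by
  rcases lt_or_eq_of_le (h1.2 _ hadj) with hlt | heq
  · exact hlt
  · exact absurd (I.rank_strict a h h' h1.1 hadj heq).symm hne

lemma first_ne_second {I : CHAInstance A H} {a : A} {h h' : H}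
    (h1 : IsFirstChoice I a h) (h2 : IsSecondChoice I a h') : h ≠ h' := by
  rintro rfl
  rcases h2.2.1 with hnf | ⟨hnf, _⟩
  · exact hnf ⟨a, h1⟩
  · exact hnf h1

lemma rank_lt_of_second {I : CHAInstance A H} {a : A} {h h' : H}
    (h1 : IsSecondChoice I a h) (hadj : I.adj a h') (hs : SCond I a h') (hne : h' ≠ h) :
    I.rank a h < I.rank a h' := by
  rcases lt_or_eq_of_le (h1.2.2 _ hadj hs) with hlt | heq
  · exact hlt
  · exact absurd (I.rank_strict a h h' h1.1 hadj heq).symm hne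

open Classical in
lemma exists_isFirstChoice [Fintype H] (I : CHAInstance A H) (a : A) :
    ∃ h, IsFirstChoice I a h := by
  classical
  obtain ⟨h, hmem, hmin⟩ := Finset.exists_min_image
    (Finset.univ.filter (fun h => I.adj a h)) (I.rank a)
    ⟨I.lastResort a, by simp [I.lastResort_adj a]⟩
  refine ⟨h, by simpa using hmem, fun h' hh' => hmin h' (by simpa using hh')⟩

lemma lastResort_not_fhouse {I : CHAInstance A H} {a : A}
    (hnf : ¬ IsFirstChoice I a (I.lastResort a)) : ¬ IsFHouse I (I.lastResort a) := by
  rintro ⟨a', ha'⟩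
  have := I.lastResort_only a a' ha'.1
  exact hnf (this ▸ ha')

lemma exists_isSecondChoice [Fintype H] {I : CHAInstance A H} {a : A} {h₀ : H}
    (hadj : I.adj a h₀) (hne : ¬ IsFirstChoice I a h₀) :
    ∃ h, IsSecondChoice I a h := by
  classical
  have hlnf : ¬ IsFirstChoice I a (I.lastResort a) := by
    intro hf
    have hne' : h₀ ≠ I.lastResort a := by rintro rfl; exact hne hf
    exact absurd (hf.2 _ hadj) (not_le.mpr (I.lastResort_worst a h₀ hadj hne'))
  have hsc : SCond I a (I.lastResort a) := Or.inl (lastResort_not_fhouse hlnf)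
  obtain ⟨h, hmem, hmin⟩ := Finset.exists_min_image
    (Finset.univ.filter (fun h => I.adj a h ∧ SCond I a h)) (I.rank a)
    ⟨I.lastResort a, by simp [I.lastResort_adj a, hsc]⟩
  simp only [Finset.mem_filter, Finset.mem_univ, true_and] at hmem
  exact ⟨h, hmem.1, hmem.2, fun h' hh' hs' => hmin h' (by simp [hh', hs'])⟩

lemma ValidEdge.wt_cases {I : CHAInstance A H} {M : Set (A × H)} {e : DirEdge A H}
    (he : ValidEdge I M e) : e.wt = 1 ∨ e.wt = -1 := by
  rcases he.2 with ⟨_, _, hw⟩ | ⟨_, _, hw⟩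
  · exact Or.inr hw
  · exact Or.inl hw

lemma ValidEdge.src_mem {I : CHAInstance A H} {M : Set (A × H)} {e : DirEdge A H}
    (he : ValidEdge I M e) : (e.agent, e.src) ∈ M := he.1

lemma ValidEdge.src_ne_tgt {I : CHAInstance A H} {M : Set (A × H)} {e : DirEdge A H}
    (he : ValidEdge I M e) : e.src ≠ e.tgt := by
  rcases he.2 with ⟨h1, h2, _⟩ | ⟨h1, h2, _⟩
  · exact first_ne_second h1 h2
  · exact (first_ne_second h2 h1).symm

lemma ValidEdge.tgt_choice {I : CHAInstance A H} {M : Set (A × H)} {e : DirEdge A H}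
    (he : ValidEdge I M e) :
    IsFirstChoice I e.agent e.tgt ∨ IsSecondChoice I e.agent e.tgt := by
  rcases he.2 with ⟨_, h2, _⟩ | ⟨_, h2, _⟩
  · exact Or.inr h2
  · exact Or.inl h2

lemma ValidEdge.tgt_adj {I : CHAInstance A H} {M : Set (A × H)} {e : DirEdge A H}
    (he : ValidEdge I M e) : I.adj e.agent e.tgt := by
  rcases he.tgt_choice with h | h
  · exact h.1
  · exact h.1

lemma edge_agent_unique {I : CHAInstance A H} {M : Set (A × H)} (hM : IsMatching I M)
    {e e' : DirEdge A H} (he : ValidEdge I M e) (he' : ValidEdge I M e')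
    (hag : e.agent = e'.agent) : e = e' := by
  obtain ⟨ag, s, t, w⟩ := e
  obtain ⟨ag', s', t', w'⟩ := e'
  simp only [DirEdge.mk.injEq] at hag ⊢
  subst hag
  have hsrc : s = s' := matched_unique hM he.1 he'.1
  subst hsrc
  have he2 := he.2
  have he2' := he'.2
  dsimp only at he2 he2'
  rcases he2 with ⟨h1, h2, hw⟩ | ⟨h1, h2, hw⟩ <;>
    rcases he2' with ⟨h1', h2', hw'⟩ | ⟨h1', h2', hw'⟩
  · exact ⟨rfl, rfl, second_unique h2 h2', by rw [hw, hw']⟩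
  · exact absurd rfl (first_ne_second h1 h1')
  · exact absurd rfl (first_ne_second h1' h1)
  · exact ⟨rfl, rfl, first_unique h2 h2', by rw [hw, hw']⟩

/-! ### Prefers lemmas -/

lemma prefers_of {I : CHAInstance A H} {M M'' : Set (A × H)} (hM : IsMatching I M)
    {x : A} {h₀ h₁ : H} (hx : (x, h₀) ∈ M) (hx' : (x, h₁) ∈ M'')
    (hr : I.rank x h₁ < I.rank x h₀) : Prefers I M'' M x :=
  ⟨h₁, hx', fun h' hh' => by rwa [matched_unique hM hh' hx]⟩

lemma not_prefers_of_common {I : CHAInstance A H} {M M'' : Set (A × H)}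
    (hM : IsMatching I M) {x : A} {hx : H} (h1 : (x, hx) ∈ M) (h2 : (x, hx) ∈ M'') :
    ¬ Prefers I M M'' x := by
  rintro ⟨h, hm, hlt⟩
  have := matched_unique hM hm h1
  subst this
  exact lt_irrefl _ (hlt _ h2)

lemma not_prefers_rev {I : CHAInstance A H} {M M'' : Set (A × H)} (hM : IsMatching I M)
    {x : A} {h₀ h₁ : H} (hx : (x, h₀) ∈ M) (hx' : (x, h₁) ∈ M'')
    (hr : I.rank x h₁ < I.rank x h₀) : ¬ Prefers I M M'' x := by
  rintro ⟨h, hm, hlt⟩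
  have := matched_unique hM hm hx
  subst this
  exact lt_asymm hr (hlt _ hx')

/-! ### Deriving contradictions with popularity -/

lemma beats [Fintype A] {I : CHAInstance A H} {M : Set (A × H)} (hpop : IsPopular I M)
    {M'' : Set (A × H)} (hM'' : IsMatching I M'') {a b c : A} (hab : a ≠ b)
    (ha : Prefers I M'' M a) (hb : Prefers I M'' M b)
    (hc : {x | Prefers I M M'' x} ⊆ {c}) : False := by
  apply hpop.2 M'' hM''
  unfold MorePopular
  rw [Nat.card_coe_set_eq, Nat.card_coe_set_eq]
  have h1 : ({a, b} : Set A).ncard ≤ {x | Prefers I M'' M x}.ncard :=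
    Set.ncard_le_ncard (by rintro x (rfl | rfl) <;> assumption) (Set.toFinite _)
  rw [Set.ncard_pair hab] at h1
  have h2 : {x | Prefers I M M'' x}.ncard ≤ 1 := by
    calc {x | Prefers I M M'' x}.ncard ≤ ({c} : Set A).ncard :=
          Set.ncard_le_ncard hc (Set.toFinite _)
      _ = 1 := Set.ncard_singleton c
  omega

lemma beats1 [Fintype A] {I : CHAInstance A H} {M : Set (A × H)} (hpop : IsPopular I M)
    {M'' : Set (A × H)} (hM'' : IsMatching I M'') {a : A}
    (ha : Prefers I M'' M a) (hc : ∀ x, ¬ Prefers I M M'' x) : False := by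
  apply hpop.2 M'' hM''
  unfold MorePopular
  rw [Nat.card_coe_set_eq, Nat.card_coe_set_eq]
  have h1 : 0 < {x | Prefers I M'' M x}.ncard :=
    (Set.ncard_pos (Set.toFinite _)).mpr ⟨a, ha⟩
  have h2 : {x | Prefers I M M'' x} = ∅ := Set.eq_empty_iff_forall_notMem.mpr hc
  rw [h2, Set.ncard_empty]
  omega

lemma ncard_le_of_swap {α : Type*} [Finite α] {s t : Set α} {b y : α} (hb : b ∈ s)
    (ht : t ⊆ insert y (s \ {b})) : t.ncard ≤ s.ncard := by
  calc t.ncard ≤ (insert y (s \ {b})).ncard :=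
        Set.ncard_le_ncard ht (Set.toFinite _)
    _ ≤ (s \ {b}).ncard + 1 := Set.ncard_insert_le _ _
    _ = s.ncard := Set.ncard_diff_singleton_add_one hb (Set.toFinite _)

/-- One agent strictly improves into a house with a free slot: contradiction with
popularity. -/
lemma move1 [Fintype A] {I : CHAInstance A H} {M : Set (A × H)} (hpop : IsPopular I M)
    {a : A} {h₀ h₁ : H} (ha : (a, h₀) ∈ M) (hadj : I.adj a h₁)
    (hrk : I.rank a h₁ < I.rank a h₀)
    (hslack : {x | (x, h₁) ∈ M}.ncard < I.cap h₁) : False := by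
  have hM := hpop.1
  set M'' : Set (A × H) := {p | p ∈ M ∧ p.1 ≠ a} ∪ {(a, h₁)} with hM''def
  have hmem : ∀ x h, (x, h) ∈ M'' ↔ ((x, h) ∈ M ∧ x ≠ a) ∨ (x = a ∧ h = h₁) := by
    intro x h
    simp only [hM''def, Set.mem_union, Set.mem_setOf_eq, Set.mem_singleton_iff,
      Prod.ext_iff]
    all_goals tauto
  have hmat : IsMatching I M'' := by
    refine ⟨?_, ?_, ?_⟩
    · rintro ⟨x, h⟩ hp
      rcases (hmem x h).1 hp with ⟨hm, _⟩ | ⟨rfl, rfl⟩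
      · exact hM.1 _ hm
      · exact hadj
    · rintro ⟨x, h⟩ hp ⟨x', h'⟩ hq hxx
      dsimp at hxx; subst hxx
      rcases (hmem x h).1 hp with ⟨hm, hne⟩ | ⟨rfl, rfl⟩ <;>
        rcases (hmem x h').1 hq with ⟨hm', hne'⟩ | ⟨he, rfl⟩
      · exact hM.2.1 _ hm _ hm' rfl
      · exact absurd he hne
      · exact absurd rfl hne'
      · rfl
    · intro h
      by_cases hh : h = h₁
      · subst hh
        have hsub : {x | (x, h) ∈ M''} ⊆ insert a {x | (x, h) ∈ M} := by
          intro x hx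
          rcases (hmem x h).1 hx with ⟨hm, _⟩ | ⟨rfl, _⟩
          · exact Set.mem_insert_of_mem _ hm
          · exact Set.mem_insert _ _
        calc {x | (x, h) ∈ M''}.ncard ≤ (insert a {x | (x, h) ∈ M}).ncard :=
              Set.ncard_le_ncard hsub (Set.toFinite _)
          _ ≤ {x | (x, h) ∈ M}.ncard + 1 := Set.ncard_insert_le _ _
          _ ≤ I.cap h := hslack
      · have hsub : {x | (x, h) ∈ M''} ⊆ {x | (x, h) ∈ M} := by
          intro x hx
          rcases (hmem x h).1 hx with ⟨hm, _⟩ | ⟨rfl, rfl⟩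
          · exact hm
          · exact absurd rfl hh
        exact le_trans (Set.ncard_le_ncard hsub (Set.toFinite _)) (hM.2.2 h)
  refine beats1 hpop hmat
    (prefers_of hM ha ((hmem a h₁).2 (Or.inr ⟨rfl, rfl⟩)) hrk) ?_
  intro x
  by_cases hx : x = a
  · subst hx
    exact not_prefers_rev hM ha ((hmem x h₁).2 (Or.inr ⟨rfl, rfl⟩)) hrk
  · rintro ⟨h, hm, hlt⟩
    exact lt_irrefl _ (hlt h ((hmem x h).2 (Or.inl ⟨hm, hx⟩)))

/-- Two agents strictly improve along a chain `a : h₀ → h₁`, `b : h₁ → h₂`, with a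
free slot at `h₂` (or `h₂ = h₀`): contradiction with popularity. -/
lemma move2 [Fintype A] {I : CHAInstance A H} {M : Set (A × H)} (hpop : IsPopular I M)
    {a b : A} {h₀ h₁ h₂ : H} (hab : a ≠ b)
    (ha : (a, h₀) ∈ M) (hb : (b, h₁) ∈ M)
    (hadja : I.adj a h₁) (hadjb : I.adj b h₂)
    (hrka : I.rank a h₁ < I.rank a h₀) (hrkb : I.rank b h₂ < I.rank b h₁)
    (hslack : {x | (x, h₂) ∈ M}.ncard < I.cap h₂ ∨ h₂ = h₀) : False := by
  have hM := hpop.1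
  have h01 : h₀ ≠ h₁ := fun he => lt_irrefl _ (he ▸ hrka)
  have h12 : h₁ ≠ h₂ := fun he => lt_irrefl _ (he ▸ hrkb)
  set M'' : Set (A × H) := {p | p ∈ M ∧ p.1 ≠ a ∧ p.1 ≠ b} ∪ {(a, h₁), (b, h₂)}
    with hM''def
  have hmem : ∀ x h, (x, h) ∈ M'' ↔
      ((x, h) ∈ M ∧ x ≠ a ∧ x ≠ b) ∨ (x = a ∧ h = h₁) ∨ (x = b ∧ h = h₂) := by
    intro x h
    simp [hM''def, Prod.ext_iff]
    tauto
  have hmat : IsMatching I M'' := by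
    refine ⟨?_, ?_, ?_⟩
    · rintro ⟨x, h⟩ hp
      rcases (hmem x h).1 hp with ⟨hm, _⟩ | ⟨rfl, rfl⟩ | ⟨rfl, rfl⟩
      · exact hM.1 _ hm
      · exact hadja
      · exact hadjb
    · rintro ⟨x, h⟩ hp ⟨x', h'⟩ hq hxx
      dsimp at hxx; subst hxx
      rcases (hmem x h).1 hp with ⟨hm, hna, hnb⟩ | ⟨rfl, rfl⟩ | ⟨rfl, rfl⟩ <;>
        rcases (hmem x h').1 hq with ⟨hm', hna', hnb'⟩ | ⟨he, rfl⟩ | ⟨he, rfl⟩ <;>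
        first
          | (exact hM.2.1 _ hm _ hm' rfl)
          | rfl
          | (solve_by_elim [absurd])
          | simp_all
    · intro h
      rcases eq_or_ne h h₁ with rfl | hne1
      · have hsub : {x | (x, h) ∈ M''} ⊆ insert a ({x | (x, h) ∈ M} \ {b}) := by
          intro x hx
          rcases (hmem x h).1 hx with ⟨hm, _, hnb⟩ | ⟨rfl, _⟩ | ⟨rfl, he⟩
          · exact Set.mem_insert_of_mem _ ⟨hm, hnb⟩
          · exact Set.mem_insert _ _
          · exact absurd he h12
        exact le_trans (ncard_le_of_swap hb hsub) (hM.2.2 h)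
      rcases eq_or_ne h h₂ with rfl | hne2
      · rcases hslack with hsl | rfl
        · have hsub : {x | (x, h) ∈ M''} ⊆ insert b {x | (x, h) ∈ M} := by
            intro x hx
            rcases (hmem x h).1 hx with ⟨hm, _, _⟩ | ⟨rfl, he⟩ | ⟨rfl, _⟩
            · exact Set.mem_insert_of_mem _ hm
            · exact absurd he h12.symm
            · exact Set.mem_insert _ _
          calc {x | (x, h) ∈ M''}.ncard ≤ (insert b {x | (x, h) ∈ M}).ncard :=
                Set.ncard_le_ncard hsub (Set.toFinite _)
            _ ≤ {x | (x, h) ∈ M}.ncard + 1 := Set.ncard_insert_le _ _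
            _ ≤ I.cap h := hsl
        · have hsub : {x | (x, h) ∈ M''} ⊆ insert b ({x | (x, h) ∈ M} \ {a}) := by
            intro x hx
            rcases (hmem x h).1 hx with ⟨hm, hna, _⟩ | ⟨rfl, he⟩ | ⟨rfl, _⟩
            · exact Set.mem_insert_of_mem _ ⟨hm, hna⟩
            · exact absurd he h12.symm
            · exact Set.mem_insert _ _
          exact le_trans (ncard_le_of_swap ha hsub) (hM.2.2 h)
      · have hsub : {x | (x, h) ∈ M''} ⊆ {x | (x, h) ∈ M} := by
          intro x hx
          rcases (hmem x h).1 hx with ⟨hm, _⟩ | ⟨rfl, rfl⟩ | ⟨rfl, rfl⟩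
          · exact hm
          · exact absurd rfl hne1
          · exact absurd rfl hne2
        exact le_trans (Set.ncard_le_ncard hsub (Set.toFinite _)) (hM.2.2 h)
  have hamem : (a, h₁) ∈ M'' := (hmem a h₁).2 (Or.inr (Or.inl ⟨rfl, rfl⟩))
  have hbmem : (b, h₂) ∈ M'' := (hmem b h₂).2 (Or.inr (Or.inr ⟨rfl, rfl⟩))
  refine beats hpop hmat hab (prefers_of hM ha hamem hrka)
    (prefers_of hM hb hbmem hrkb) (c := a) ?_
  intro x hx
  exfalso
  by_cases hxa : x = a
  · subst hxa; exact not_prefers_rev hM ha hamem hrka hx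
  by_cases hxb : x = b
  · subst hxb; exact not_prefers_rev hM hb hbmem hrkb hx
  · obtain ⟨h, hm, hlt⟩ := hx
    exact lt_irrefl _ (hlt h ((hmem x h).2 (Or.inl ⟨hm, hxa, hxb⟩)))

/-- Two agents strictly improve along a chain `a : h₀ → h₁`, `b : h₁ → h₂`, and one
agent `c` is demoted from `h₂` to its last resort: contradiction with popularity. -/
lemma move3 [Fintype A] {I : CHAInstance A H} {M : Set (A × H)} (hpop : IsPopular I M)
    {a b c : A} {h₀ h₁ h₂ : H} (hab : a ≠ b) (hac : a ≠ c) (hbc : b ≠ c)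
    (ha : (a, h₀) ∈ M) (hb : (b, h₁) ∈ M) (hc : (c, h₂) ∈ M)
    (hadja : I.adj a h₁) (hadjb : I.adj b h₂)
    (hrka : I.rank a h₁ < I.rank a h₀) (hrkb : I.rank b h₂ < I.rank b h₁) : False := by
  have hM := hpop.1
  have h01 : h₀ ≠ h₁ := fun he => lt_irrefl _ (he ▸ hrka)
  have h12 : h₁ ≠ h₂ := fun he => lt_irrefl _ (he ▸ hrkb)
  set lc := I.lastResort c with hlc
  have hlc2 : h₂ ≠ lc := fun he =>
    hbc (I.lastResort_only c b (by rw [he, hlc] at hadjb; exact hadjb))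
  have hlc1 : h₁ ≠ lc := fun he =>
    hac (I.lastResort_only c a (by rw [he, hlc] at hadja; exact hadja))
  have hMlc : {x | (x, lc) ∈ M} = ∅ := by
    ext x
    simp only [Set.mem_setOf_eq, Set.mem_empty_iff_false, iff_false]
    intro hx
    have hxc : x = c := I.lastResort_only c x (hM.1 _ hx)
    subst hxc
    exact hlc2 (matched_unique hM hc hx)
  set M'' : Set (A × H) :=
    {p | p ∈ M ∧ p.1 ≠ a ∧ p.1 ≠ b ∧ p.1 ≠ c} ∪ {(a, h₁), (b, h₂), (c, lc)}
    with hM''def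
  have hmem : ∀ x h, (x, h) ∈ M'' ↔
      ((x, h) ∈ M ∧ x ≠ a ∧ x ≠ b ∧ x ≠ c) ∨ (x = a ∧ h = h₁) ∨ (x = b ∧ h = h₂) ∨
        (x = c ∧ h = lc) := by
    intro x h
    simp [hM''def, Prod.ext_iff]
    tauto
  have hmat : IsMatching I M'' := by
    refine ⟨?_, ?_, ?_⟩
    · rintro ⟨x, h⟩ hp
      rcases (hmem x h).1 hp with ⟨hm, _⟩ | ⟨rfl, rfl⟩ | ⟨rfl, rfl⟩ | ⟨rfl, rfl⟩
      · exact hM.1 _ hm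
      · exact hadja
      · exact hadjb
      · exact I.lastResort_adj _
    · rintro ⟨x, h⟩ hp ⟨x', h'⟩ hq hxx
      dsimp at hxx; subst hxx
      rcases (hmem x h).1 hp with ⟨hm, hna, hnb, hnc⟩ | ⟨rfl, rfl⟩ | ⟨rfl, rfl⟩ |
          ⟨rfl, rfl⟩ <;>
        rcases (hmem x h').1 hq with ⟨hm', _, _, _⟩ | ⟨he, rfl⟩ | ⟨he, rfl⟩ |
          ⟨he, rfl⟩ <;>
        first
          | (exact hM.2.1 _ hm _ hm' rfl)
          | rfl
          | simp_all
    · intro h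
      rcases eq_or_ne h h₁ with rfl | hne1
      · have hsub : {x | (x, h) ∈ M''} ⊆ insert a ({x | (x, h) ∈ M} \ {b}) := by
          intro x hx
          rcases (hmem x h).1 hx with ⟨hm, _, hnb, _⟩ | ⟨rfl, _⟩ | ⟨rfl, he⟩ |
            ⟨rfl, he⟩
          · exact Set.mem_insert_of_mem _ ⟨hm, hnb⟩
          · exact Set.mem_insert _ _
          · exact absurd he h12
          · exact absurd he hlc1
        exact le_trans (ncard_le_of_swap hb hsub) (hM.2.2 h)
      rcases eq_or_ne h h₂ with rfl | hne2
      · have hsub : {x | (x, h) ∈ M''} ⊆ insert b ({x | (x, h) ∈ M} \ {c}) := by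
          intro x hx
          rcases (hmem x h).1 hx with ⟨hm, _, _, hnc⟩ | ⟨rfl, he⟩ | ⟨rfl, _⟩ |
            ⟨rfl, he⟩
          · exact Set.mem_insert_of_mem _ ⟨hm, hnc⟩
          · exact absurd he h12.symm
          · exact Set.mem_insert _ _
          · exact absurd he hlc2
        exact le_trans (ncard_le_of_swap hc hsub) (hM.2.2 h)
      rcases eq_or_ne h lc with rfl | hne3
      · have hsub : {x | (x, lc) ∈ M''} ⊆ {c} := by
          intro x hx
          rcases (hmem x lc).1 hx with ⟨hm, _⟩ | ⟨rfl, he⟩ | ⟨rfl, he⟩ | ⟨rfl, _⟩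
          · have hx' : x ∈ {y | (y, lc) ∈ M} := hm
            rw [hMlc] at hx'
            exact hx'.elim
          · exact absurd he hlc1.symm
          · exact absurd he hlc2.symm
          · rfl
        calc {x | (x, lc) ∈ M''}.ncard ≤ ({c} : Set A).ncard :=
              Set.ncard_le_ncard hsub (Set.toFinite _)
          _ = 1 := Set.ncard_singleton c
          _ ≤ I.cap lc := by simp [hlc, I.lastResort_cap]
      · have hsub : {x | (x, h) ∈ M''} ⊆ {x | (x, h) ∈ M} := by
          intro x hx
          rcases (hmem x h).1 hx with ⟨hm, _⟩ | ⟨rfl, rfl⟩ | ⟨rfl, rfl⟩ | ⟨rfl, rfl⟩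
          · exact hm
          · exact absurd rfl hne1
          · exact absurd rfl hne2
          · exact absurd rfl hne3
        exact le_trans (Set.ncard_le_ncard hsub (Set.toFinite _)) (hM.2.2 h)
  have hamem : (a, h₁) ∈ M'' := (hmem a h₁).2 (Or.inr (Or.inl ⟨rfl, rfl⟩))
  have hbmem : (b, h₂) ∈ M'' := (hmem b h₂).2 (Or.inr (Or.inr (Or.inl ⟨rfl, rfl⟩)))
  refine beats hpop hmat hab (prefers_of hM ha hamem hrka)
    (prefers_of hM hb hbmem hrkb) (c := c) ?_
  intro x hx
  by_cases hxc : x = c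
  · exact hxc
  exfalso
  by_cases hxa : x = a
  · subst hxa; exact not_prefers_rev hM ha hamem hrka hx
  by_cases hxb : x = b
  · subst hxb; exact not_prefers_rev hM hb hbmem hrkb hx
  · obtain ⟨h, hm, hlt⟩ := hx
    exact lt_irrefl _ (hlt h ((hmem x h).2 (Or.inl ⟨hm, hxa, hxb, hxc⟩)))

/-- The AIKM/Sng–Manlove characterization data for a popular matching: a matching in
which every agent is matched, every agent gets its first or second choice, and every
`f`-house is matched with `min (cap h) |f(h)|` members of `f(h)`. -/
def GoodMatching (I : CHAInstance A H) (M : Set (A × H)) : Prop :=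
  IsMatching I M ∧ (∀ a, ∃ h, (a, h) ∈ M) ∧
    (∀ a h, (a, h) ∈ M → IsFirstChoice I a h ∨ IsSecondChoice I a h) ∧
    (∀ h : H, min (I.cap h) (fSet I h).ncard ≤ ({x | (x, h) ∈ M} ∩ fSet I h).ncard)

theorem IsPopular.good [Fintype A] [Fintype H] {I : CHAInstance A H} {M : Set (A × H)}
    (hpop : IsPopular I M) : GoodMatching I M := by
  have hM := hpop.1
  -- every agent is matched
  have hP0 : ∀ a, ∃ h, (a, h) ∈ M := by
    intro a
    by_contra hno
    push_neg at hno
    set M'' : Set (A × H) := insert (a, I.lastResort a) M with hM''def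
    have hmat : IsMatching I M'' := by
      refine ⟨?_, ?_, ?_⟩
      · rintro ⟨x, h⟩ hp
        rcases hp with hp | hp
        · cases hp; exact I.lastResort_adj a
        · exact hM.1 _ hp
      · rintro ⟨x, h⟩ hp ⟨x', h'⟩ hq hxx
        dsimp at hxx; subst hxx
        rcases hp with hp | hp <;> rcases hq with hq | hq
        · rw [hp, hq]
        · simp only [Prod.mk.injEq] at hp
          obtain ⟨rfl, rfl⟩ := hp
          exact absurd hq (hno h')
        · simp only [Prod.mk.injEq] at hq
          obtain ⟨rfl, rfl⟩ := hq
          exact absurd hp (hno h)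
        · exact hM.2.1 _ hp _ hq rfl
      · intro h
        by_cases hh : h = I.lastResort a
        · have hsub : {x | (x, h) ∈ M''} ⊆ {a} := by
            intro x hx
            rcases hx with hx | hx
            · simp only [Prod.mk.injEq] at hx
              exact hx.1
            · rw [hh] at hx
              exact I.lastResort_only a x (hM.1 _ hx)
          calc {x | (x, h) ∈ M''}.ncard ≤ ({a} : Set A).ncard :=
                Set.ncard_le_ncard hsub (Set.toFinite _)
            _ = 1 := Set.ncard_singleton a
            _ ≤ I.cap h := by rw [hh, I.lastResort_cap]
        · have hsub : {x | (x, h) ∈ M''} ⊆ {x | (x, h) ∈ M} := by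
            intro x hx
            rcases hx with hx | hx
            · rw [Prod.ext_iff] at hx; exact absurd hx.2 hh
            · exact hx
          exact le_trans (Set.ncard_le_ncard hsub (Set.toFinite _)) (hM.2.2 h)
    refine beats1 hpop hmat ⟨I.lastResort a, Set.mem_insert _ _,
      fun h' hh' => absurd hh' (hno h')⟩ ?_
    rintro x ⟨h, hm, hlt⟩
    exact lt_irrefl _ (hlt h (Set.mem_insert_of_mem _ hm))
  -- every f-house not containing one of its f-agents is full
  have hN1 : ∀ a h, IsFirstChoice I a h → (a, h) ∉ M →
      {x | (x, h) ∈ M}.ncard = I.cap h := by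
    intro a h hf hnm
    by_contra hne
    obtain ⟨h₀, hh₀⟩ := hP0 a
    have hne0 : h₀ ≠ h := fun he => hnm (he ▸ hh₀)
    exact move1 hpop hh₀ hf.1 (rank_lt_of_first hf (hM.1 _ hh₀) hne0)
      (lt_of_le_of_ne (hM.2.2 h) hne)
  -- main chain argument
  have hchain : ∀ (a b : A) (h₀ ht fb : H), (a, h₀) ∈ M → (b, ht) ∈ M →
      I.adj a ht → I.rank a ht < I.rank a h₀ → IsFirstChoice I b fb → fb ≠ ht →
      False := by
    intro a b h₀ ht fb ha hb hadj hrk hfb hne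
    have h0t : h₀ ≠ ht := fun he => lt_irrefl _ (he ▸ hrk)
    have hab : a ≠ b := by
      rintro rfl
      exact h0t (matched_unique hM ha hb)
    have hrkb : I.rank b fb < I.rank b ht := rank_lt_of_first hfb (hM.1 _ hb) hne.symm
    by_cases hsl : {x | (x, fb) ∈ M}.ncard < I.cap fb
    · exact move2 hpop hab ha hb hadj hfb.1 hrk hrkb (Or.inl hsl)
    by_cases hfb0 : fb = h₀
    · exact move2 hpop hab ha hb hadj hfb.1 hrk hrkb (Or.inr hfb0)
    push_neg at hsl
    have hfull : 0 < {x | (x, fb) ∈ M}.ncard := lt_of_lt_of_le (I.cap_pos fb) hsl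
    obtain ⟨cc, hcc⟩ := (Set.ncard_pos (Set.toFinite _)).1 hfull
    have hacc : a ≠ cc := by
      rintro rfl
      exact hfb0 (matched_unique hM hcc ha)
    have hbcc : b ≠ cc := by
      rintro rfl
      exact hne (matched_unique hM hcc hb)
    exact move3 hpop hab hacc hbcc ha hb hcc hadj hfb.1 hrk hrkb
  -- the f-house condition
  have hP2 : ∀ h : H,
      min (I.cap h) (fSet I h).ncard ≤ ({x | (x, h) ∈ M} ∩ fSet I h).ncard := by
    intro h
    by_contra hlt'
    push_neg at hlt'
    -- there is an f-agent of h not matched to h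
    obtain ⟨a, haf, hanm⟩ : ∃ a, a ∈ fSet I h ∧ (a, h) ∉ M := by
      by_contra hall
      push_neg at hall
      have hsub : fSet I h ⊆ {x | (x, h) ∈ M} ∩ fSet I h := fun x hx =>
        ⟨hall x hx, hx⟩
      have := Set.ncard_le_ncard hsub (Set.toFinite _)
      exact absurd (le_trans (min_le_right _ _) this) (not_le.2 hlt')
    have hfullh := hN1 a h haf hanm
    -- there is a non-f-agent matched to h
    obtain ⟨b, hbm, hbnf⟩ : ∃ b, (b, h) ∈ M ∧ b ∉ fSet I h := by
      by_contra hall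
      push_neg at hall
      have hsub : {x | (x, h) ∈ M} ⊆ {x | (x, h) ∈ M} ∩ fSet I h := fun x hx =>
        ⟨hx, hall x hx⟩
      have := Set.ncard_le_ncard hsub (Set.toFinite _)
      rw [hfullh] at this
      exact absurd (le_trans (min_le_left _ _) this) (not_le.2 hlt')
    obtain ⟨h₀, hh₀⟩ := hP0 a
    have hne0 : h₀ ≠ h := fun he => hanm (he ▸ hh₀)
    obtain ⟨fb, hfb⟩ := exists_isFirstChoice I b
    have hfbne : fb ≠ h := fun he => hbnf (he ▸ hfb)
    exact hchain a b h₀ h fb hh₀ hbm haf.1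
      (rank_lt_of_first haf (hM.1 _ hh₀) hne0) hfb hfbne
  -- every agent is matched to its first or second choice
  have hP1 : ∀ a h, (a, h) ∈ M → IsFirstChoice I a h ∨ IsSecondChoice I a h := by
    intro a h hm
    by_cases h1 : IsFirstChoice I a h
    · exact Or.inl h1
    by_cases h2 : IsSecondChoice I a h
    · exact Or.inr h2
    exfalso
    obtain ⟨sa, hsa⟩ := exists_isSecondChoice (hM.1 _ hm) h1
    have hnesa : h ≠ sa := fun he => h2 (he ▸ hsa)
    rcases lt_trichotomy (I.rank a h) (I.rank a sa) with hlt | heq | hgt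
    · -- h would have to satisfy `SCond`, contradiction
      have hnsc : ¬ SCond I a h := fun hsc =>
        absurd (hsa.2.2 h (hM.1 _ hm) hsc) (not_le.2 hlt)
      rw [SCond] at hnsc
      push_neg at hnsc
      obtain ⟨hfh', hcond⟩ := hnsc
      have hcap : I.cap h ≤ (fSet I h).ncard := hcond h1
      have h5 := hP2 h
      rw [min_eq_left hcap] at h5
      have hEq : {x | (x, h) ∈ M} ∩ fSet I h = {x | (x, h) ∈ M} :=
        Set.eq_of_subset_of_ncard_le Set.inter_subset_left
          (le_trans (hM.2.2 h) h5) (Set.toFinite _)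
      have : a ∈ {x | (x, h) ∈ M} ∩ fSet I h := hEq.symm ▸ hm
      exact h1 this.2
    · exact hnesa (I.rank_strict a h sa (hM.1 _ hm) hsa.1 heq)
    · -- `a` is matched worse than `s(a)`
      by_cases hsl : {x | (x, sa) ∈ M}.ncard < I.cap sa
      · exact move1 hpop hm hsa.1 hgt hsl
      push_neg at hsl
      obtain ⟨b, hbm, hbnf⟩ : ∃ b, (b, sa) ∈ M ∧ ¬ IsFirstChoice I b sa := by
        rcases hsa.2.1 with hnf | ⟨_, hflt⟩
        · have hfull : 0 < {x | (x, sa) ∈ M}.ncard :=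
            lt_of_lt_of_le (I.cap_pos sa) hsl
          obtain ⟨b, hb⟩ := (Set.ncard_pos (Set.toFinite _)).1 hfull
          exact ⟨b, hb, fun hf => hnf ⟨b, hf⟩⟩
        · by_contra hall
          push_neg at hall
          have hsub : {x | (x, sa) ∈ M} ⊆ fSet I sa := fun x hx => hall x hx
          have := Set.ncard_le_ncard hsub (Set.toFinite _)
          omega
      obtain ⟨fb, hfb⟩ := exists_isFirstChoice I b
      have hfbne : fb ≠ sa := fun he => hbnf (he ▸ hfb)
      exact hchain a b h sa fb hm hbm hsa.1 hgt hfb hfbne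
  exact ⟨hM, hP0, hP1, hP2⟩

lemma ncard_setOf_eq_card_filter [Fintype A] (q : A → Prop) [DecidablePred q] :
    {x | q x}.ncard = (Finset.univ.filter q).card := by
  rw [Set.ncard_eq_toFinset_card', Set.toFinset_setOf]

theorem GoodMatching.isPopular [Fintype A] [Fintype H] {I : CHAInstance A H}
    {M : Set (A × H)} (hG : GoodMatching I M) : IsPopular I M := by
  classical
  obtain ⟨hM, hP0, hP1, hP2⟩ := hG
  refine ⟨hM, fun M'' hM'' hmp => ?_⟩
  set φ : A → H := fun a => (hP0 a).choose with hφ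
  have φspec : ∀ a, (a, φ a) ∈ M := fun a => (hP0 a).choose_spec
  set φ'' : A → H := fun a =>
    if hx : ∃ h, (a, h) ∈ M'' then hx.choose else φ a with hφ''
  have φ''spec : ∀ a h, (a, h) ∈ M'' → (a, φ'' a) ∈ M'' := by
    intro a h hh
    rw [hφ'']
    dsimp only
    rw [dif_pos ⟨h, hh⟩]
    exact (⟨h, hh⟩ : ∃ h', (a, h') ∈ M'').choose_spec
  -- key facts about improving agents
  have hkey : ∀ x, Prefers I M'' M x →
      (x, φ'' x) ∈ M'' ∧ (x, φ'' x) ∉ M ∧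
        {y | (y, φ'' x) ∈ M} ⊆ fSet I (φ'' x) ∧
        {y | (y, φ'' x) ∈ M}.ncard = I.cap (φ'' x) := by
    rintro x ⟨p, hp, hlt⟩
    have h1 : (x, φ'' x) ∈ M'' := φ''spec x p hp
    have hpeq : φ'' x = p := matched_unique hM'' h1 hp
    have hrk : I.rank x p < I.rank x (φ x) := hlt _ (φspec x)
    have hadjp : I.adj x p := hM''.1 _ hp
    have hnm : (x, p) ∉ M := by
      intro hmem
      have := matched_unique hM hmem (φspec x)
      rw [this] at hrk
      exact lt_irrefl _ hrk
    rcases hP1 x (φ x) (φspec x) with hf | hs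
    · exact absurd (hf.2 p hadjp) (not_le.2 hrk)
    have hnsc : ¬ SCond I x p := fun hsc =>
      absurd (hs.2.2 p hadjp hsc) (not_le.2 hrk)
    rw [SCond] at hnsc
    push_neg at hnsc
    obtain ⟨hfh, hcond⟩ := hnsc
    have hcap : I.cap p ≤ (fSet I p).ncard := by
      by_cases hfx : IsFirstChoice I x p
      · by_contra hcl
        push_neg at hcl
        have h5 := hP2 p
        rw [min_eq_right (le_of_lt hcl)] at h5
        have hEq : {y | (y, p) ∈ M} ∩ fSet I p = fSet I p :=
          Set.eq_of_subset_of_ncard_le Set.inter_subset_right h5 (Set.toFinite _)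
        have : x ∈ {y | (y, p) ∈ M} ∩ fSet I p := hEq.symm ▸ hfx
        exact hnm this.1
      · exact hcond hfx
    have h5 := hP2 p
    rw [min_eq_left hcap] at h5
    have hEq : {y | (y, p) ∈ M} ∩ fSet I p = {y | (y, p) ∈ M} :=
      Set.eq_of_subset_of_ncard_le Set.inter_subset_left
        (le_trans (hM.2.2 p) h5) (Set.toFinite _)
    have hsubf : {y | (y, p) ∈ M} ⊆ fSet I p := fun y hy => (hEq.symm ▸ hy).2
    have hcard : {y | (y, p) ∈ M}.ncard = I.cap p :=
      le_antisymm (hM.2.2 p)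
        (le_trans h5 (Set.ncard_le_ncard Set.inter_subset_left (Set.toFinite _)))
    rw [hpeq]
    exact ⟨hp, hnm, hsubf, hcard⟩
  set Pf : Finset A := Finset.univ.filter (fun x => Prefers I M'' M x) with hPf
  set Df : Finset A := Finset.univ.filter (fun x => Prefers I M M'' x) with hDf
  have hfib : ∀ p : H, (Pf.filter (fun x => φ'' x = p)).card ≤
      (Df.filter (fun x => φ x = p)).card := by
    intro p
    rcases (Pf.filter (fun x => φ'' x = p)).eq_empty_or_nonempty with he | ⟨a, ha⟩
    · simp [he]
    simp only [Finset.mem_filter, hPf, Finset.mem_univ, true_and] at ha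
    obtain ⟨haP, hap⟩ := ha
    have key := hkey a haP
    rw [hap] at key
    obtain ⟨-, -, hsubf, hcard⟩ := key
    set MFp : Finset A := Finset.univ.filter (fun x => (x, p) ∈ M) with hMFp
    set M2Fp : Finset A := Finset.univ.filter (fun x => (x, p) ∈ M'') with hM2Fp
    have hMFcard : MFp.card = I.cap p := by
      rw [hMFp, ← ncard_setOf_eq_card_filter]
      exact hcard
    have hM2Fcard : M2Fp.card ≤ I.cap p := by
      rw [hM2Fp, ← ncard_setOf_eq_card_filter]
      exact hM''.2.2 p
    have hsub1 : Pf.filter (fun x => φ'' x = p) ⊆ M2Fp \ MFp := by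
      intro x hx
      simp only [Finset.mem_filter, hPf, Finset.mem_univ, true_and] at hx
      obtain ⟨hxP, hxp⟩ := hx
      have kx := hkey x hxP
      rw [hxp] at kx
      simp only [Finset.mem_sdiff, hM2Fp, hMFp, Finset.mem_filter, Finset.mem_univ,
        true_and]
      exact ⟨kx.1, kx.2.1⟩
    have hsub2 : MFp \ M2Fp ⊆ Df.filter (fun x => φ x = p) := by
      intro b hb
      simp only [Finset.mem_sdiff, hM2Fp, hMFp, Finset.mem_filter, Finset.mem_univ,
        true_and] at hb
      obtain ⟨hbm, hbnm⟩ := hb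
      have hbφ : φ b = p := matched_unique hM (φspec b) hbm
      simp only [Finset.mem_filter, hDf, Finset.mem_univ, true_and]
      refine ⟨⟨p, hbm, fun h' hh' => ?_⟩, hbφ⟩
      have hne : h' ≠ p := fun he => hbnm (he ▸ hh')
      exact rank_lt_of_first (hsubf hbm) (hM''.1 _ hh') hne
    have e1 : (M2Fp \ MFp).card + (M2Fp ∩ MFp).card = M2Fp.card :=
      Finset.card_sdiff_add_card_inter _ _
    have e2 : (MFp \ M2Fp).card + (MFp ∩ M2Fp).card = MFp.card :=
      Finset.card_sdiff_add_card_inter _ _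
    have e3 : (M2Fp ∩ MFp).card = (MFp ∩ M2Fp).card := by rw [Finset.inter_comm]
    have c1 := Finset.card_le_card hsub1
    have c2 := Finset.card_le_card hsub2
    omega
  have hPcard : Pf.card = ∑ p : H, (Pf.filter (fun x => φ'' x = p)).card :=
    Finset.card_eq_sum_card_fiberwise (fun x _ => Finset.mem_univ _)
  have hDcard : Df.card = ∑ p : H, (Df.filter (fun x => φ x = p)).card :=
    Finset.card_eq_sum_card_fiberwise (fun x _ => Finset.mem_univ _)
  have hle : Pf.card ≤ Df.card := by
    rw [hPcard, hDcard]
    exact Finset.sum_le_sum fun p _ => hfib p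
  have hle' : {x | Prefers I M'' M x}.ncard ≤ {x | Prefers I M M'' x}.ncard := by
    rw [ncard_setOf_eq_card_filter, ncard_setOf_eq_card_filter]
    simpa [hPf, hDf] using hle
  unfold MorePopular at hmp
  rw [Nat.card_coe_set_eq, Nat.card_coe_set_eq] at hmp
  omega

open scoped Classical in
lemma chain_count {l : List (DirEdge A H)} (hne : l ≠ []) (hc : ChainOK l)
    (ha : AltWt l) (h : H) :
    ((l.countP (fun e => decide (e.tgt = h)) : ℤ) =
        l.countP (fun e => decide (e.src = h)) +
        (if (l.getLast hne).tgt = h then 1 else 0) -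
        (if (l.head hne).src = h then 1 else 0)) ∧
    ((l.countP (fun e => decide (e.tgt = h ∧ e.wt = 1)) : ℤ) =
        l.countP (fun e => decide (e.src = h ∧ e.wt = -1)) +
        (if (l.getLast hne).tgt = h ∧ (l.getLast hne).wt = 1 then 1 else 0) -
        (if (l.head hne).src = h ∧ (l.head hne).wt = -1 then 1 else 0)) := by
  induction l with
  | nil => exact absurd rfl hne
  | cons e l ih =>
    cases l with
    | nil =>
      simp only [List.countP_cons, List.countP_nil, List.getLast_singleton,
        List.head_cons, decide_eq_true_eq]
      constructor <;> (push_cast; by_cases h1 : e.tgt = h <;> by_cases h2 : e.src = h <;> by_cases h3 : e.wt = 1 <;> by_cases h4 : e.wt = -1 <;> simp [h1, h2, h3, h4])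
    | cons e' l' =>
      have hne' : e' :: l' ≠ [] := List.cons_ne_nil _ _
      have hc0 : e.tgt = e'.src := by
        have := hc 0 (by simp)
        simpa using this
      have ha0 : e'.wt = -e.wt := by
        have := ha 0 (by simp)
        simpa using this
      have hc' : ChainOK (e' :: l') := by
        intro i hi
        have := hc (i + 1) (by simpa using Nat.succ_lt_succ hi)
        simpa [List.get_cons_succ] using this
      have ha' : AltWt (e' :: l') := by
        intro i hi
        have := ha (i + 1) (by simpa using Nat.succ_lt_succ hi)
        simpa [List.get_cons_succ] using this
      obtain ⟨ih1, ih2⟩ := ih hne' hc' ha'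
      rw [List.head_cons] at ih1 ih2
      have hgl : (e :: e' :: l').getLast hne = (e' :: l').getLast hne' :=
        List.getLast_cons hne'
      have hwiff : (-e.wt = -1) ↔ (e.wt = 1) := by omega
      constructor
      · rw [List.countP_cons (p := fun e => decide (e.tgt = h)) (a := e) (l := e' :: l'),
          List.countP_cons (p := fun e => decide (e.src = h)) (a := e) (l := e' :: l'),
          hgl, List.head_cons]
        push_cast
        simp only [decide_eq_true_eq]
        rw [ih1, ← hc0]
        split_ifs <;> omega
      · rw [List.countP_cons (p := fun e => decide (e.tgt = h ∧ e.wt = 1)) (a := e) (l := e' :: l'),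
          List.countP_cons (p := fun e => decide (e.src = h ∧ e.wt = -1)) (a := e) (l := e' :: l'),
          hgl, List.head_cons]
        push_cast
        simp only [decide_eq_true_eq]
        rw [ih2]
        simp only [← hc0, ha0, hwiff]
        split_ifs <;> omega

open scoped Classical in
lemma total_count {I : CHAInstance A H} {M : Set (A × H)}
    (S : List (List (DirEdge A H)))
    (hS : ∀ l ∈ S, IsSwitchingPath I M l ∨ IsSwitchingCycle I M l) (h : H) :
    (S.flatten.countP (fun e => decide (e.tgt = h ∧ e.wt = 1)) =
      S.flatten.countP (fun e => decide (e.src = h ∧ e.wt = -1))) ∧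
    ((S.flatten.countP (fun e => decide (e.tgt = h)) : ℤ) ≤
      S.flatten.countP (fun e => decide (e.src = h)) +
      S.countP (fun l => decide (IsSwitchingPath I M l ∧
        ∃ e, l.getLast? = some e ∧ e.tgt = h))) := by
  induction S with
  | nil => simp [List.flatten]
  | cons l S' ih =>
    obtain ⟨ih1, ih2⟩ := ih (fun l' hl' => hS l' (List.mem_cons_of_mem _ hl'))
    have hl := hS l (List.mem_cons_self)
    have hjoin : (l :: S').flatten = l ++ S'.flatten := rfl
    rw [hjoin, List.countP_append, List.countP_append, List.countP_append,
      List.countP_append, List.countP_cons]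
    rcases hl with hp | hcy
    · obtain ⟨⟨⟨hne, hval, hch, hnd⟩, halt, hhead, hlast⟩, hunsat⟩ := hp
      obtain ⟨cc1, cc2⟩ := chain_count hne hch halt h
      have hhw : (l.head hne).wt = 1 := hhead _ (List.head?_eq_head hne)
      have hlw : (l.getLast hne).wt = -1 := hlast _ (l.getLast?_eq_getLast hne)
      have hcond : (IsSwitchingPath I M l ∧ ∃ e, l.getLast? = some e ∧ e.tgt = h) ↔
          (l.getLast hne).tgt = h := by
        constructor
        · rintro ⟨-, e, he, ht⟩
          rw [l.getLast?_eq_getLast hne] at he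
          cases he
          exact ht
        · intro ht
          exact ⟨⟨⟨⟨hne, hval, hch, hnd⟩, halt, hhead, hlast⟩, hunsat⟩,
            ⟨l.getLast hne, l.getLast?_eq_getLast hne, ht⟩⟩
      constructor
      · -- signed counts match within a path
        have : (l.countP (fun e => decide (e.tgt = h ∧ e.wt = 1)) : ℤ) =
            l.countP (fun e => decide (e.src = h ∧ e.wt = -1)) := by
          rw [cc2]
          have h1 : ¬ ((l.getLast hne).tgt = h ∧ (l.getLast hne).wt = 1) := by
            rintro ⟨-, hw⟩
            rw [hlw] at hw
            omega
          have h2 : ¬ ((l.head hne).src = h ∧ (l.head hne).wt = -1) := by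
            rintro ⟨-, hw⟩
            rw [hhw] at hw
            omega
          rw [if_neg h1, if_neg h2]
          omega
        have := this
        omega
      · have hle : (l.countP (fun e => decide (e.tgt = h)) : ℤ) ≤
            l.countP (fun e => decide (e.src = h)) +
            (if (l.getLast hne).tgt = h then 1 else 0) := by
          rw [cc1]
          split_ifs <;> omega
        have hcnt : (if decide (IsSwitchingPath I M l ∧
            ∃ e, l.getLast? = some e ∧ e.tgt = h) = true then 1 else 0) =
            (if (l.getLast hne).tgt = h then (1 : ℕ) else 0) := by
          simp only [decide_eq_true_eq]
          exact if_congr hcond rfl rfl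
        rw [hcnt]
        push_cast
        split_ifs at hle ⊢ <;> omega
    · obtain ⟨⟨hne, hval, hch, hwrap, hnd⟩, heven, halt, hwwrap⟩ := hcy
      obtain ⟨cc1, cc2⟩ := chain_count hne hch halt h
      have hw1 : (l.getLast hne).tgt = (l.head hne).src :=
        hwrap _ _ (l.getLast?_eq_getLast hne) (List.head?_eq_head hne)
      have hw2 : (l.head hne).wt = -(l.getLast hne).wt :=
        hwwrap _ _ (l.getLast?_eq_getLast hne) (List.head?_eq_head hne)
      have hiff : ((l.getLast hne).tgt = h ∧ (l.getLast hne).wt = 1) ↔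
          ((l.head hne).src = h ∧ (l.head hne).wt = -1) := by
        rw [hw1, hw2]
        constructor
        · rintro ⟨h1, h2⟩
          exact ⟨h1, by omega⟩
        · rintro ⟨h1, h2⟩
          exact ⟨h1, by omega⟩
      constructor
      · have key : (l.countP (fun e => decide (e.tgt = h ∧ e.wt = 1)) : ℤ) =
            l.countP (fun e => decide (e.src = h ∧ e.wt = -1)) := by
          by_cases hca : (l.getLast hne).tgt = h ∧ (l.getLast hne).wt = 1
          · rw [cc2, if_pos hca, if_pos (hiff.mp hca)]
            omega
          · rw [cc2, if_neg hca, if_neg (fun hcb => hca (hiff.mpr hcb))]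
            omega
        omega
      · have key : (l.countP (fun e => decide (e.tgt = h)) : ℤ) =
            l.countP (fun e => decide (e.src = h)) := by
          by_cases hca : (l.getLast hne).tgt = h
          · rw [cc1, if_pos hca, if_pos (by rw [← hw1]; exact hca)]
            omega
          · rw [cc1, if_neg hca, if_neg (fun hcb => hca (by rw [hw1]; exact hcb))]
            omega
        push_cast
        split_ifs <;> omega

theorem GoodMatching.switchingMove [Fintype A] [Fintype H] {I : CHAInstance A H}
    {M : Set (A × H)} (hG : GoodMatching I M)
    {S : List (List (DirEdge A H))} (hS : IsSwitchingSet I M S) :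
    GoodMatching I (SwitchingMove M S) := by
  classical
  obtain ⟨hM, hP0, hP1, hP2⟩ := hG
  obtain ⟨hSty, hSdisj, hScap⟩ := hS
  have htot := fun h : H => total_count S hSty h
  set L := S.flatten with hL
  have hvalid : ∀ e ∈ L, ValidEdge I M e := by
    intro e he
    rw [hL, List.mem_flatten] at he
    obtain ⟨l, hl, hel⟩ := he
    rcases hSty l hl with hp | hc
    · exact hp.1.1.2.1 e hel
    · exact hc.1.2.1 e hel
  have hagents : ∀ e ∈ L, ∀ e' ∈ L, e.agent = e'.agent → e = e' := fun e he e' he' =>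
    edge_agent_unique hM (hvalid e he) (hvalid e' he')
  have hnodupA : (L.map (·.agent)).Nodup := by
    rw [hL, List.map_flatten, List.nodup_flatten]
    constructor
    · intro la hla
      rw [List.mem_map] at hla
      obtain ⟨l, hl, rfl⟩ := hla
      have hsrc : (l.map (·.src)).Nodup := by
        rcases hSty l hl with hp | hc
        · have h2 : (l.map (·.src) ++ (l.getLast?.map (·.tgt)).toList).Nodup :=
            hp.1.1.2.2.2
          exact (List.nodup_append.mp h2).1
        · exact hc.1.2.2.2.2
      have hlnd : l.Nodup := hsrc.of_map
      refine hlnd.map_on fun x hx y hy hxy => ?_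
      exact hagents x (by rw [hL, List.mem_flatten]; exact ⟨l, hl, hx⟩) y
        (by rw [hL, List.mem_flatten]; exact ⟨l, hl, hy⟩) hxy
    · rw [List.pairwise_map]
      refine List.Pairwise.imp_of_mem ?_ hSdisj
      intro l₁ l₂ h1 h2 hdis x hx1 hx2
      rw [List.mem_map] at hx1 hx2
      obtain ⟨e1, he1, hq1⟩ := hx1
      obtain ⟨e2, he2, hq2⟩ := hx2
      have he12 : e1 = e2 :=
        hagents e1 (by rw [hL, List.mem_flatten]; exact ⟨l₁, h1, he1⟩) e2
          (by rw [hL, List.mem_flatten]; exact ⟨l₂, h2, he2⟩) (hq1.trans hq2.symm)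
      exact hdis e1 he1 (he12 ▸ he2)
  -- membership characterization of the new matching
  have hmem : ∀ a h, (a, h) ∈ SwitchingMove M S ↔
      ((a, h) ∈ M ∧ ∀ e ∈ L, e.agent ≠ a) ∨ ∃ e ∈ L, e.agent = a ∧ e.tgt = h := by
    intro a h
    constructor
    · rintro (⟨hm, hrem⟩ | hmv)
      · left
        refine ⟨hm, fun e heL hea => ?_⟩
        rw [hL, List.mem_flatten] at heL
        obtain ⟨l, hl, hel⟩ := heL
        apply hrem
        refine ⟨l, hl, e, hel, ?_⟩
        have h1 := (hvalid e (by rw [hL, List.mem_flatten]; exact ⟨l, hl, hel⟩)).1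
        rw [hea] at h1
        rw [matched_unique hM hm h1, hea]
      · obtain ⟨l, hl, e, hel, heq⟩ := hmv
        right
        rw [Prod.ext_iff] at heq
        exact ⟨e, by rw [hL, List.mem_flatten]; exact ⟨l, hl, hel⟩, heq.1.symm, heq.2.symm⟩
    · rintro (⟨hm, hno⟩ | ⟨e, heL, hea, het⟩)
      · left
        refine ⟨hm, ?_⟩
        rintro ⟨l, hl, e, hel, heq⟩
        rw [Prod.ext_iff] at heq
        exact hno e (by rw [hL, List.mem_flatten]; exact ⟨l, hl, hel⟩) heq.1.symm
      · rw [hL, List.mem_flatten] at heL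
        obtain ⟨l, hl, hel⟩ := heL
        right
        exact ⟨l, hl, e, hel, by rw [hea, het]⟩
  -- counting sets of agents via `countP`
  have hcount : ∀ (p : DirEdge A H → Prop) (q : DirEdge A H → Bool),
      (∀ e, q e = true ↔ p e) →
      {x | ∃ e ∈ L, e.agent = x ∧ p e}.ncard = L.countP q := by
    intro p q hpq
    have hnd : ((L.filter q).map (·.agent)).Nodup :=
      ((L.filter_sublist).map _).nodup hnodupA
    have hset : {x | ∃ e ∈ L, e.agent = x ∧ p e} =
        ↑((L.filter q).map (·.agent)).toFinset := by
      ext x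
      simp only [Set.mem_setOf_eq, Finset.coe_sort_coe, Finset.mem_coe,
        List.mem_toFinset, List.mem_map, List.mem_filter]
      constructor
      · rintro ⟨e, heL, hea, hpe⟩
        exact ⟨e, ⟨heL, (hpq e).2 hpe⟩, hea⟩
      · rintro ⟨e, ⟨heL, hpe⟩, hea⟩
        exact ⟨e, heL, hea, (hpq e).1 hpe⟩
    rw [hset, Set.ncard_coe_finset, List.toFinset_card_of_nodup hnd,
      List.length_map, ← List.countP_eq_length_filter]
  -- basic structural facts
  have hsub1 : ∀ h : H, {x | ∃ e ∈ L, e.agent = x ∧ e.src = h} ⊆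
      {x | (x, h) ∈ M} := by
    rintro h x ⟨e, heL, hea, hes⟩
    have h1 := (hvalid e heL).1
    rw [hea, hes] at h1
    exact h1
  have hdisj2 : ∀ (h : H) (x : A), (∃ e ∈ L, e.agent = x ∧ e.tgt = h) →
      (x, h) ∈ M → False := by
    rintro h x ⟨e, heL, hea, het⟩ hm
    have h1 := (hvalid e heL).1
    rw [hea] at h1
    exact (hvalid e heL).src_ne_tgt ((matched_unique hM h1 hm).trans het.symm)
  -- the new assignment sets per house
  have hM'set : ∀ h : H, {x | (x, h) ∈ SwitchingMove M S} =
      ({x | (x, h) ∈ M} \ {x | ∃ e ∈ L, e.agent = x ∧ e.src = h}) ∪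
        {x | ∃ e ∈ L, e.agent = x ∧ e.tgt = h} := by
    intro h
    ext x
    rw [Set.mem_union, Set.mem_diff]
    simp only [Set.mem_setOf_eq]
    rw [hmem x h]
    constructor
    · rintro (⟨hm, hno⟩ | hex)
      · exact Or.inl ⟨hm, fun ⟨e, heL, hea, _⟩ => hno e heL hea⟩
      · exact Or.inr hex
    · rintro (⟨hm, hns⟩ | hex)
      · refine Or.inl ⟨hm, fun e heL hea => hns ⟨e, heL, hea, ?_⟩⟩
        have h1 := (hvalid e heL).1
        rw [hea] at h1
        exact matched_unique hM h1 hm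
      · exact Or.inr hex
  have hcard1 : ∀ h : H, {x | (x, h) ∈ SwitchingMove M S}.ncard +
      {x | ∃ e ∈ L, e.agent = x ∧ e.src = h}.ncard =
      {x | (x, h) ∈ M}.ncard + {x | ∃ e ∈ L, e.agent = x ∧ e.tgt = h}.ncard := by
    intro h
    have hdisj : Disjoint
        ({x | (x, h) ∈ M} \ {x | ∃ e ∈ L, e.agent = x ∧ e.src = h})
        {x | ∃ e ∈ L, e.agent = x ∧ e.tgt = h} := by
      rw [Set.disjoint_left]
      rintro x ⟨hm, -⟩ hx
      exact hdisj2 h x hx hm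
    rw [hM'set h, Set.ncard_union_eq hdisj (Set.toFinite _) (Set.toFinite _)]
    have := Set.ncard_diff_add_ncard_of_subset (hsub1 h) (Set.toFinite _)
    omega
  -- the signed versions
  have ht1 : ∀ h : H, {x | ∃ e ∈ L, e.agent = x ∧ e.src = h} ∩ fSet I h =
      {x | ∃ e ∈ L, e.agent = x ∧ (e.src = h ∧ e.wt = -1)} := by
    intro h
    ext x
    constructor
    · rintro ⟨⟨e, heL, hea, hes⟩, hf⟩
      refine ⟨e, heL, hea, hes, ?_⟩
      rcases (hvalid e heL).2 with ⟨-, -, hw⟩ | ⟨hsc, -, -⟩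
      · exact hw
      · rw [hea, hes] at hsc
        exact absurd rfl (first_ne_second hf hsc)
    · rintro ⟨e, heL, hea, hes, hw⟩
      refine ⟨⟨e, heL, hea, hes⟩, ?_⟩
      rcases (hvalid e heL).2 with ⟨hfc, -, -⟩ | ⟨-, -, hw'⟩
      · rw [hea, hes] at hfc
        exact hfc
      · rw [hw] at hw'
        omega
  have ht2 : ∀ h : H, {x | ∃ e ∈ L, e.agent = x ∧ e.tgt = h} ∩ fSet I h =
      {x | ∃ e ∈ L, e.agent = x ∧ (e.tgt = h ∧ e.wt = 1)} := by
    intro h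
    ext x
    constructor
    · rintro ⟨⟨e, heL, hea, het⟩, hf⟩
      refine ⟨e, heL, hea, het, ?_⟩
      rcases (hvalid e heL).2 with ⟨-, hsc, -⟩ | ⟨-, -, hw⟩
      · rw [hea, het] at hsc
        exact absurd rfl (first_ne_second hf hsc)
      · exact hw
    · rintro ⟨e, heL, hea, het, hw⟩
      refine ⟨⟨e, heL, hea, het⟩, ?_⟩
      rcases (hvalid e heL).2 with ⟨-, -, hw'⟩ | ⟨-, hfc, -⟩
      · rw [hw] at hw'
        omega
      · rw [hea, het] at hfc
        exact hfc
  have hM'fset : ∀ h : H, {x | (x, h) ∈ SwitchingMove M S} ∩ fSet I h =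
      (({x | (x, h) ∈ M} ∩ fSet I h) \
          {x | ∃ e ∈ L, e.agent = x ∧ (e.src = h ∧ e.wt = -1)}) ∪
        {x | ∃ e ∈ L, e.agent = x ∧ (e.tgt = h ∧ e.wt = 1)} := by
    intro h
    ext x
    constructor
    · rintro ⟨hx, hf⟩
      rw [hM'set h] at hx
      rcases hx with ⟨hm, hns⟩ | ht
      · exact Or.inl ⟨⟨hm, hf⟩, fun ⟨e, heL, hea, hes, _⟩ => hns ⟨e, heL, hea, hes⟩⟩
      · exact Or.inr ((ht2 h) ▸ (⟨ht, hf⟩ :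
          x ∈ {x | ∃ e ∈ L, e.agent = x ∧ e.tgt = h} ∩ fSet I h))
    · rintro (⟨⟨hm, hf⟩, hns⟩ | htp)
      · refine ⟨?_, hf⟩
        rw [hM'set h]
        exact Or.inl ⟨hm, fun hsa => hns ((ht1 h) ▸ (⟨hsa, hf⟩ :
          x ∈ {x | ∃ e ∈ L, e.agent = x ∧ e.src = h} ∩ fSet I h))⟩
      · have hx : x ∈ {x | ∃ e ∈ L, e.agent = x ∧ e.tgt = h} ∩ fSet I h :=
          (ht2 h).symm ▸ htp
        refine ⟨?_, hx.2⟩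
        rw [hM'set h]
        exact Or.inr hx.1
  have hcard2 : ∀ h : H, ({x | (x, h) ∈ SwitchingMove M S} ∩ fSet I h).ncard +
      {x | ∃ e ∈ L, e.agent = x ∧ (e.src = h ∧ e.wt = -1)}.ncard =
      ({x | (x, h) ∈ M} ∩ fSet I h).ncard +
      {x | ∃ e ∈ L, e.agent = x ∧ (e.tgt = h ∧ e.wt = 1)}.ncard := by
    intro h
    have hdisj : Disjoint
        (({x | (x, h) ∈ M} ∩ fSet I h) \
          {x | ∃ e ∈ L, e.agent = x ∧ (e.src = h ∧ e.wt = -1)})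
        {x | ∃ e ∈ L, e.agent = x ∧ (e.tgt = h ∧ e.wt = 1)} := by
      rw [Set.disjoint_left]
      rintro x ⟨⟨hm, -⟩, -⟩ ⟨e, heL, hea, het, -⟩
      exact hdisj2 h x ⟨e, heL, hea, het⟩ hm
    have hsubN : {x | ∃ e ∈ L, e.agent = x ∧ (e.src = h ∧ e.wt = -1)} ⊆
        {x | (x, h) ∈ M} ∩ fSet I h := by
      rintro x ⟨e, heL, hea, hes, hw⟩
      refine ⟨hsub1 h ⟨e, heL, hea, hes⟩, ?_⟩
      have hx : x ∈ {x | ∃ e ∈ L, e.agent = x ∧ e.src = h} ∩ fSet I h :=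
        (ht1 h).symm ▸ (⟨e, heL, hea, hes, hw⟩ :
          x ∈ {x | ∃ e ∈ L, e.agent = x ∧ (e.src = h ∧ e.wt = -1)})
      exact hx.2
    rw [hM'fset h, Set.ncard_union_eq hdisj (Set.toFinite _) (Set.toFinite _)]
    have := Set.ncard_diff_add_ncard_of_subset hsubN (Set.toFinite _)
    omega
  -- now assemble all the pieces
  refine ⟨⟨?_, ?_, ?_⟩, ?_, ?_, ?_⟩
  · -- adjacency
    rintro ⟨a, h⟩ hp
    rcases (hmem a h).1 hp with ⟨hm, -⟩ | ⟨e, heL, hea, het⟩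
    · exact hM.1 _ hm
    · have := (hvalid e heL).tgt_adj
      rw [hea, het] at this
      exact this
  · -- each agent matched at most once
    rintro ⟨a, h⟩ hp ⟨a', h'⟩ hq haa
    dsimp at haa
    subst haa
    have : h = h' := by
      rcases (hmem a h).1 hp with ⟨hm, hno⟩ | ⟨e, heL, hea, het⟩ <;>
        rcases (hmem a h').1 hq with ⟨hm', hno'⟩ | ⟨e', heL', hea', het'⟩
      · exact matched_unique hM hm hm'
      · exact absurd hea' (hno e' heL')
      · exact absurd hea (hno' e heL)
      · rw [← het, ← het']
        rw [hagents e heL e' heL' (hea.trans hea'.symm)]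
    rw [this]
  · -- capacity constraints
    intro h
    obtain ⟨-, k2⟩ := htot h
    have e1 : {x | ∃ e ∈ L, e.agent = x ∧ e.tgt = h}.ncard =
        L.countP (fun e => decide (e.tgt = h)) :=
      hcount _ _ (fun e => by simp)
    have e2 : {x | ∃ e ∈ L, e.agent = x ∧ e.src = h}.ncard =
        L.countP (fun e => decide (e.src = h)) :=
      hcount _ _ (fun e => by simp)
    rw [← e1, ← e2] at k2
    have hsc := hScap h
    have hu : unsatDeg I M h = I.cap h - {x | (x, h) ∈ M}.ncard := rfl
    have hle : {x | (x, h) ∈ M}.ncard ≤ I.cap h := hM.2.2 h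
    have hc1 := hcard1 h
    omega
  · -- every agent matched
    intro a
    by_cases he : ∃ e ∈ L, e.agent = a
    · obtain ⟨e, heL, hea⟩ := he
      exact ⟨e.tgt, (hmem a e.tgt).2 (Or.inr ⟨e, heL, hea, rfl⟩)⟩
    · push_neg at he
      obtain ⟨h, hh⟩ := hP0 a
      exact ⟨h, (hmem a h).2 (Or.inl ⟨hh, he⟩)⟩
  · -- first or second choices
    intro a h hp
    rcases (hmem a h).1 hp with ⟨hm, -⟩ | ⟨e, heL, hea, het⟩
    · exact hP1 a h hm
    · have := (hvalid e heL).tgt_choice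
      rw [hea, het] at this
      exact this
  · -- the f-house condition
    intro h
    obtain ⟨k1, -⟩ := htot h
    have e3 : {x | ∃ e ∈ L, e.agent = x ∧ (e.tgt = h ∧ e.wt = 1)}.ncard =
        L.countP (fun e => decide (e.tgt = h ∧ e.wt = 1)) :=
      hcount _ _ (fun e => by simp)
    have e4 : {x | ∃ e ∈ L, e.agent = x ∧ (e.src = h ∧ e.wt = -1)}.ncard =
        L.countP (fun e => decide (e.src = h ∧ e.wt = -1)) :=
      hcount _ _ (fun e => by simp)
    have hc2 := hcard2 h
    have hp2 := hP2 h
    omega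

end CHAInstance

open CHAInstance in
/-- Theorem, part (i): every switching move on the switching graph `G_M`
of a CHA instance with respect to a popular matching `M` produces another popular
matching: reassigning every agent whose edge lies in the switching set from its house
in `M` to the other element of `{f(a), s(a)}` yields a popular matching. -/
theorem switchingMove_isPopular
    {A H : Type*} [Fintype A] [Fintype H] (I : CHAInstance A H)
    (M : Set (A × H)) (hM : IsPopular I M)
    (S : List (List (DirEdge A H))) (hS : IsSwitchingSet I M S) :
    IsPopular I (SwitchingMove M S) :=
  ((IsPopular.good hM).switchingMove hS).isPopular
end
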